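/- arXiv:2312.11249 — 4 statements merged into one kernel-verified Lean document; each statement's English description precedes it below -/
import Mathlib

section
/- Let d ≥ 3 and 2* = 2d/(d−2). There exists a constant C > 0 such that for every absolutely continuous function f : (0,∞) → ℝ with ∫_0^∞ r |f'(r)|² dr < ∞ and ∫_0^∞ |f(r)|²/r dr < ∞, one has ( ∫_0^∞ r |f'(r)|² dr )^{1/d} · ( ∫_0^∞ |f(r)|²/r dr )^{1−1/d} ≥ C ( ∫_0^∞ |f(r)|^{2*}/r dr )^{2/2*}. -/
open MeasureTheory Set
open scoped ENNReal NNReal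

noncomputable section

/-- `f` is (locally) absolutely continuous on `(0,∞)` with derivative `f'`:
the fundamental theorem of calculus holds on every compact subinterval. -/
def ACDerivOn (f f' : ℝ → ℝ) : Prop :=
  ∀ a b : ℝ, 0 < a → a ≤ b →
    IntegrableOn f' (Set.Icc a b) ∧ f b - f a = ∫ t in a..b, f' t

lemma sq_int {h : ℝ → ℝ} {a b : ℝ} (hab : a ≤ b) (hi : IntegrableOn h (Set.Ioc a b)) :
    (∫ t in Set.Ioc a b, h t) ^ 2 =
      2 * ∫ t in Set.Ioc a b, h t * ∫ s in Set.Ioc a t, h s := by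
  set μ := volume.restrict (Set.Ioc a b) with hμ
  set H : ℝ → ℝ := fun t => ∫ s in Set.Ioc a t, h s with hH
  set T : ℝ := ∫ t in Set.Ioc a b, h t with hT
  have hF : Integrable (fun p : ℝ × ℝ => h p.1 * h p.2) (μ.prod μ) := hi.mul_prod hi
  have hS : MeasurableSet {p : ℝ × ℝ | p.2 ≤ p.1} :=
    measurableSet_le measurable_snd measurable_fst
  have hK : Integrable ({p : ℝ × ℝ | p.2 ≤ p.1}.indicator fun p : ℝ × ℝ => h p.1 * h p.2)
      (μ.prod μ) := hF.indicator hS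
  have hiIcc : IntegrableOn h (Set.Icc a b) := (integrableOn_Icc_iff_integrableOn_Ioc).mpr hi
  have hHc : ContinuousOn H (Set.Icc a b) := intervalIntegral.continuousOn_primitive hiIcc
  have hHh : IntegrableOn (fun t => h t * H t) (Set.Ioc a b) :=
    (hiIcc.mul_continuousOn hHc isCompact_Icc).mono_set Set.Ioc_subset_Icc_self
  -- first computation
  have claim1 : ∫ p, ({p : ℝ × ℝ | p.2 ≤ p.1}.indicator fun p : ℝ × ℝ => h p.1 * h p.2) p
      ∂(μ.prod μ) = ∫ t in Set.Ioc a b, h t * H t := by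
    rw [MeasureTheory.integral_prod _ hK]
    refine setIntegral_congr_fun measurableSet_Ioc fun t ht => ?_
    have : (fun s => ({p : ℝ × ℝ | p.2 ≤ p.1}.indicator fun p : ℝ × ℝ => h p.1 * h p.2) (t, s))
        = (Set.Iic t).indicator fun s => h t * h s := by
      funext s
      simp [Set.indicator_apply]
    rw [this, integral_indicator measurableSet_Iic, hμ,
      Measure.restrict_restrict measurableSet_Iic]
    have hset : Set.Iic t ∩ Set.Ioc a b = Set.Ioc a t := by
      rw [Set.inter_comm, Set.Ioc_inter_Iic, min_eq_right ht.2]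
    rw [hset, integral_const_mul]
  -- second computation
  have claim2 : ∫ p, ({p : ℝ × ℝ | p.2 ≤ p.1}.indicator fun p : ℝ × ℝ => h p.1 * h p.2) p
      ∂(μ.prod μ) = T * T - ∫ t in Set.Ioc a b, h t * H t := by
    rw [MeasureTheory.integral_prod _ hK]
    have swap := MeasureTheory.integral_integral_swap (μ := μ) (ν := μ)
      (f := fun t s => ({p : ℝ × ℝ | p.2 ≤ p.1}.indicator fun p : ℝ × ℝ => h p.1 * h p.2) (t, s))
      (by exact hK)
    rw [swap]
    have inner : ∀ s ∈ Set.Ioc a b,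
        (∫ t, ({p : ℝ × ℝ | p.2 ≤ p.1}.indicator fun p : ℝ × ℝ => h p.1 * h p.2) (t, s) ∂μ)
          = T * h s - H s * h s := by
      intro s hs
      have : (fun t => ({p : ℝ × ℝ | p.2 ≤ p.1}.indicator fun p : ℝ × ℝ => h p.1 * h p.2) (t, s))
          = (Set.Ici s).indicator fun t => h t * h s := by
        funext t
        simp [Set.indicator_apply]
      rw [this, integral_indicator measurableSet_Ici, hμ,
        Measure.restrict_restrict measurableSet_Ici]
      have hset : Set.Ici s ∩ Set.Ioc a b = Set.Icc s b := by
        ext t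
        simp only [Set.mem_inter_iff, Set.mem_Ici, Set.mem_Ioc, Set.mem_Icc]
        constructor
        · rintro ⟨h1, _, h3⟩
          exact ⟨h1, h3⟩
        · rintro ⟨h1, h2⟩
          exact ⟨h1, hs.1.trans_le h1, h2⟩
      rw [hset, integral_Icc_eq_integral_Ioc, integral_mul_const]
      have hsplit : T = H s + ∫ t in Set.Ioc s b, h t := by
        rw [hT, hH]
        rw [← setIntegral_union (Set.Ioc_disjoint_Ioc_of_le le_rfl) measurableSet_Ioc
          (hi.mono_set (Set.Ioc_subset_Ioc le_rfl hs.2)) (hi.mono_set (Set.Ioc_subset_Ioc hs.1.le le_rfl)),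
          Set.Ioc_union_Ioc_eq_Ioc hs.1.le hs.2]
      have : (∫ t in Set.Ioc s b, h t) = T - H s := by linarith
      rw [this]; ring
    rw [setIntegral_congr_fun measurableSet_Ioc inner]
    have h1 : IntegrableOn (fun s => T * h s) (Set.Ioc a b) := hi.const_mul T
    have h2 : IntegrableOn (fun s => H s * h s) (Set.Ioc a b) := by
      have := hHh
      simpa [mul_comm] using this
    rw [integral_sub h1 h2, integral_const_mul]
    congr 1
    refine setIntegral_congr_fun measurableSet_Ioc fun t _ => mul_comm _ _
  have := claim1.symm.trans claim2
  have hT2 : T ^ 2 = T * T := sq T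
  linarith

lemma sq_eq {f f' : ℝ → ℝ} (hac : ACDerivOn f f') {a b : ℝ} (ha : 0 < a) (hab : a ≤ b) :
    f b ^ 2 - f a ^ 2 = ∫ t in Set.Ioc a b, 2 * f t * f' t := by
  set H : ℝ → ℝ := fun t => ∫ s in Set.Ioc a t, f' s with hH
  have hiIcc : IntegrableOn f' (Set.Icc a b) := (hac a b ha hab).1
  have hi : IntegrableOn f' (Set.Ioc a b) := hiIcc.mono_set Set.Ioc_subset_Icc_self
  have hfa : ∀ t ∈ Set.Icc a b, f t = f a + H t := by
    intro t ht
    have h2 := (hac a t ha ht.1).2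
    rw [intervalIntegral.integral_of_le ht.1] at h2
    simp only [hH]
    linarith
  have hHc : ContinuousOn H (Set.Icc a b) := intervalIntegral.continuousOn_primitive hiIcc
  have hHh : IntegrableOn (fun t => f' t * H t) (Set.Ioc a b) :=
    (hiIcc.mul_continuousOn hHc isCompact_Icc).mono_set Set.Ioc_subset_Icc_self
  have hfb : f b = f a + H b := hfa b ⟨hab, le_rfl⟩
  have key : (∫ t in Set.Ioc a b, 2 * f t * f' t)
      = 2 * f a * H b + 2 * ∫ t in Set.Ioc a b, f' t * H t := by
    have congr1 : ∫ t in Set.Ioc a b, 2 * f t * f' t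
        = ∫ t in Set.Ioc a b, (2 * f a * f' t + 2 * (f' t * H t)) := by
      refine setIntegral_congr_fun measurableSet_Ioc fun t ht => ?_
      rw [hfa t (Set.mem_Icc_of_Ioc ht)]; ring
    rw [congr1, integral_add (hi.const_mul _) (hHh.const_mul 2), integral_const_mul,
      integral_const_mul]
  have hsq := sq_int hab hi
  rw [hfb, key]
  simp only [hH] at *
  nlinarith [hsq]

lemma eq_primitive {f f' : ℝ → ℝ} (hac : ACDerivOn f f') {a t : ℝ} (ha : 0 < a) (hat : a ≤ t) :
    f t = f a + ∫ s in Set.Ioc a t, f' s := by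
  have h2 := (hac a t ha hat).2
  rw [intervalIntegral.integral_of_le hat] at h2
  linarith

lemma contOn {f f' : ℝ → ℝ} (hac : ACDerivOn f f') : ContinuousOn f (Set.Ioi 0) := by
  intro x hx
  have hx0 : (0 : ℝ) < x := hx
  have ha : (0 : ℝ) < x / 2 := by linarith
  have hab : x / 2 ≤ x + 1 := by linarith
  have hiIcc : IntegrableOn f' (Set.Icc (x / 2) (x + 1)) := (hac _ _ ha hab).1
  have hHc : ContinuousOn (fun t => f (x / 2) + ∫ s in Set.Ioc (x / 2) t, f' s)
      (Set.Icc (x / 2) (x + 1)) :=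
    continuousOn_const.add (intervalIntegral.continuousOn_primitive hiIcc)
  have hfc : ContinuousOn f (Set.Icc (x / 2) (x + 1)) := by
    refine hHc.congr fun t ht => ?_
    exact eq_primitive hac ha ht.1
  have hmem : Set.Icc (x / 2) (x + 1) ∈ nhds x := Icc_mem_nhds (by linarith) (by linarith)
  exact (hfc.continuousAt hmem).continuousWithinAt

lemma lint_inv_top {b : ℝ} (hb : 0 < b) :
    (∫⁻ r in Set.Ioo (0 : ℝ) b, ENNReal.ofReal r⁻¹) = ⊤ := by
  by_contra hfin
  have hmeas : AEStronglyMeasurable (fun r : ℝ => r⁻¹) (volume.restrict (Set.Ioo (0 : ℝ) b)) :=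
    (measurable_inv).aestronglyMeasurable
  have hint : IntegrableOn (fun r : ℝ => r⁻¹) (Set.Ioo (0 : ℝ) b) := by
    refine ⟨hmeas, ?_⟩
    rw [hasFiniteIntegral_iff_ofReal ?pos]
    case pos =>
      filter_upwards [ae_restrict_mem measurableSet_Ioo] with r hr
      exact inv_nonneg.mpr hr.1.le
    exact lt_top_iff_ne_top.mpr hfin
  have h2 : IntegrableOn (fun x : ℝ => x ^ (-1 : ℝ)) (Set.Ioo (0 : ℝ) b) := by
    refine hint.congr_fun (fun x hx => ?_) measurableSet_Ioo
    exact (Real.rpow_neg_one x).symm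
  have := (intervalIntegral.integrableOn_Ioo_rpow_iff hb).mp h2
  linarith

lemma exists_small {f : ℝ → ℝ}
    (hB : (∫⁻ r in Set.Ioi (0 : ℝ), ENNReal.ofReal (f r ^ 2 / r)) < ⊤)
    {ε b : ℝ} (hε : 0 < ε) (hb : 0 < b) : ∃ a, 0 < a ∧ a ≤ b ∧ f a ^ 2 < ε := by
  by_contra hcon
  push_neg at hcon
  have key : ∫⁻ r in Set.Ioo (0 : ℝ) b, ENNReal.ofReal (ε * r⁻¹)
      ≤ ∫⁻ r in Set.Ioo (0 : ℝ) b, ENNReal.ofReal (f r ^ 2 / r) := by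
    refine lintegral_mono_ae ?_
    filter_upwards [ae_restrict_mem measurableSet_Ioo] with r hr
    refine ENNReal.ofReal_le_ofReal ?_
    rw [div_eq_mul_inv]
    exact mul_le_mul_of_nonneg_right (hcon r hr.1 hr.2.le) (inv_nonneg.mpr hr.1.le)
  have hleft : ∫⁻ r in Set.Ioo (0 : ℝ) b, ENNReal.ofReal (ε * r⁻¹) = ⊤ := by
    have hmul : ∀ r : ℝ, ENNReal.ofReal (ε * r⁻¹) = ENNReal.ofReal ε * ENNReal.ofReal r⁻¹ :=
      fun r => ENNReal.ofReal_mul hε.le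
    simp_rw [hmul]
    rw [lintegral_const_mul' _ _ ENNReal.ofReal_ne_top, lint_inv_top hb,
      ENNReal.mul_top (by simp [hε])]
  have htop : (∫⁻ r in Set.Ioi (0 : ℝ), ENNReal.ofReal (f r ^ 2 / r)) = ⊤ := by
    refine top_le_iff.mp ?_
    calc (⊤ : ℝ≥0∞) = ∫⁻ r in Set.Ioo (0 : ℝ) b, ENNReal.ofReal (ε * r⁻¹) := hleft.symm
      _ ≤ ∫⁻ r in Set.Ioo (0 : ℝ) b, ENNReal.ofReal (f r ^ 2 / r) := key
      _ ≤ ∫⁻ r in Set.Ioi (0 : ℝ), ENNReal.ofReal (f r ^ 2 / r) :=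
          lintegral_mono_set fun r hr => hr.1
  exact absurd htop (lt_top_iff_ne_top.mp hB)

lemma sup_bound {f f' : ℝ → ℝ} (hac : ACDerivOn f f')
    (hA : (∫⁻ r in Set.Ioi (0 : ℝ), ENNReal.ofReal (r * f' r ^ 2)) < ⊤)
    (hB : (∫⁻ r in Set.Ioi (0 : ℝ), ENNReal.ofReal (f r ^ 2 / r)) < ⊤)
    {b : ℝ} (hb : 0 < b) :
    ENNReal.ofReal (f b ^ 2) ≤
      2 * (∫⁻ r in Set.Ioi (0 : ℝ), ENNReal.ofReal (f r ^ 2 / r)) ^ ((1 : ℝ) / 2) *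
        (∫⁻ r in Set.Ioi (0 : ℝ), ENNReal.ofReal (r * f' r ^ 2)) ^ ((1 : ℝ) / 2) := by
  set A := ∫⁻ r in Set.Ioi (0 : ℝ), ENNReal.ofReal (r * f' r ^ 2) with hAdef
  set B := ∫⁻ r in Set.Ioi (0 : ℝ), ENNReal.ofReal (f r ^ 2 / r) with hBdef
  set M : ℝ≥0∞ := 2 * B ^ ((1 : ℝ) / 2) * A ^ ((1 : ℝ) / 2) with hMdef
  have step : ∀ a : ℝ, 0 < a → a ≤ b → ENNReal.ofReal (f b ^ 2)
      ≤ ENNReal.ofReal (f a ^ 2) + M := by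
    intro a ha hab
    have hsub : Set.Icc a b ⊆ Set.Ioi 0 := fun t ht => lt_of_lt_of_le ha ht.1
    have hfc : ContinuousOn f (Set.Icc a b) := (contOn hac).mono hsub
    have hiIcc : IntegrableOn f' (Set.Icc a b) := (hac a b ha hab).1
    have hi' : IntegrableOn f' (Set.Ioc a b) := hiIcc.mono_set Set.Ioc_subset_Icc_self
    have hint : IntegrableOn (fun t => 2 * f t * f' t) (Set.Ioc a b) := by
      have h1 : IntegrableOn (fun t => (2 * f t) * f' t) (Set.Icc a b) :=
        hiIcc.continuousOn_mul (continuousOn_const.mul hfc) isCompact_Icc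
      exact h1.mono_set Set.Ioc_subset_Icc_self
    have habs_eq : (fun t => |2 * f t * f' t|) = fun t => 2 * (|f t| * |f' t|) := by
      funext t
      rw [abs_mul, abs_mul, abs_two]
      ring
    have hint2 : IntegrableOn (fun t => 2 * (|f t| * |f' t|)) (Set.Ioc a b) := by
      have := hint.abs
      rwa [habs_eq] at this
    -- real inequality
    have hreal : f b ^ 2 ≤ f a ^ 2 + ∫ t in Set.Ioc a b, 2 * (|f t| * |f' t|) := by
      have heq := sq_eq hac ha hab
      have hmono : (∫ t in Set.Ioc a b, 2 * f t * f' t)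
          ≤ ∫ t in Set.Ioc a b, 2 * (|f t| * |f' t|) := by
        refine setIntegral_mono_on hint hint2 measurableSet_Ioc fun t _ => ?_
        calc 2 * f t * f' t ≤ |2 * f t * f' t| := le_abs_self _
          _ = 2 * (|f t| * |f' t|) := by rw [abs_mul, abs_mul, abs_two]; ring
      linarith
    have hnn : (0 : ℝ) ≤ ∫ t in Set.Ioc a b, 2 * (|f t| * |f' t|) :=
      setIntegral_nonneg measurableSet_Ioc fun t _ => by positivity
    have h1 : ENNReal.ofReal (f b ^ 2)
        ≤ ENNReal.ofReal (f a ^ 2)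
          + ENNReal.ofReal (∫ t in Set.Ioc a b, 2 * (|f t| * |f' t|)) := by
      calc ENNReal.ofReal (f b ^ 2)
          ≤ ENNReal.ofReal (f a ^ 2 + ∫ t in Set.Ioc a b, 2 * (|f t| * |f' t|)) :=
            ENNReal.ofReal_le_ofReal hreal
        _ = _ := ENNReal.ofReal_add (sq_nonneg _) hnn
    have h2 : ENNReal.ofReal (∫ t in Set.Ioc a b, 2 * (|f t| * |f' t|))
        = ∫⁻ t in Set.Ioc a b, ENNReal.ofReal (2 * (|f t| * |f' t|)) :=
      ofReal_integral_eq_lintegral_ofReal hint2 (ae_of_all _ fun t => by positivity)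
    have h3 : (∫⁻ t in Set.Ioc a b, ENNReal.ofReal (2 * (|f t| * |f' t|)))
        = 2 * ∫⁻ t in Set.Ioc a b, ENNReal.ofReal (|f t| * |f' t|) := by
      simp_rw [ENNReal.ofReal_mul (by norm_num : (0 : ℝ) ≤ 2)]
      rw [lintegral_const_mul' _ _ ENNReal.ofReal_ne_top]
      norm_num
    -- Cauchy-Schwarz
    have hprod : (∫⁻ t in Set.Ioc a b, ENNReal.ofReal (|f t| * |f' t|))
        = ∫⁻ t in Set.Ioc a b,
            ENNReal.ofReal (|f t| / Real.sqrt t) * ENNReal.ofReal (Real.sqrt t * |f' t|) := by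
      refine setLIntegral_congr_fun measurableSet_Ioc (fun t ht => ?_)
      have ht0 : 0 < t := lt_trans ha ht.1
      have hst : Real.sqrt t ≠ 0 := ne_of_gt (Real.sqrt_pos.mpr ht0)
      rw [← ENNReal.ofReal_mul (by positivity)]
      congr 1
      field_simp
    have g1m : AEMeasurable (fun t => ENNReal.ofReal (|f t| / Real.sqrt t))
        (volume.restrict (Set.Ioc a b)) := by
      have hc : ContinuousOn (fun t => |f t| / Real.sqrt t) (Set.Icc a b) := by
        refine hfc.abs.div (Real.continuous_sqrt.continuousOn) fun t ht => ?_
        exact ne_of_gt (Real.sqrt_pos.mpr (lt_of_lt_of_le ha ht.1))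
      exact ((hc.aemeasurable measurableSet_Icc).mono_measure
        (Measure.restrict_mono Set.Ioc_subset_Icc_self le_rfl)).ennreal_ofReal
    have g2m : AEMeasurable (fun t => ENNReal.ofReal (Real.sqrt t * |f' t|))
        (volume.restrict (Set.Ioc a b)) := by
      have hf'm : AEMeasurable (fun t => |f' t|) (volume.restrict (Set.Ioc a b)) :=
        hi'.abs.aestronglyMeasurable.aemeasurable
      exact ((Real.continuous_sqrt.measurable.aemeasurable).mul hf'm).ennreal_ofReal
    have hpq : Real.HolderConjugate 2 2 := Real.holderConjugate_iff.mpr ⟨one_lt_two, by norm_num⟩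
    have holder := ENNReal.lintegral_mul_le_Lp_mul_Lq (volume.restrict (Set.Ioc a b)) hpq g1m g2m
    simp only [Pi.mul_apply] at holder
    have e1 : (∫⁻ t in Set.Ioc a b, ENNReal.ofReal (|f t| / Real.sqrt t) ^ (2 : ℝ))
        ≤ B := by
      have heq : (∫⁻ t in Set.Ioc a b, ENNReal.ofReal (|f t| / Real.sqrt t) ^ (2 : ℝ))
          = ∫⁻ t in Set.Ioc a b, ENNReal.ofReal (f t ^ 2 / t) := by
        refine setLIntegral_congr_fun measurableSet_Ioc (fun t ht => ?_)
        have ht0 : 0 < t := lt_trans ha ht.1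
        rw [ENNReal.ofReal_rpow_of_nonneg (by positivity) (by norm_num)]
        congr 1
        rw [show ((2 : ℝ)) = ((2 : ℕ) : ℝ) by norm_num, Real.rpow_natCast, div_pow, sq_abs,
          Real.sq_sqrt ht0.le]
      rw [heq, hBdef]
      exact lintegral_mono_set fun t ht => lt_trans ha ht.1
    have e2 : (∫⁻ t in Set.Ioc a b, ENNReal.ofReal (Real.sqrt t * |f' t|) ^ (2 : ℝ))
        ≤ A := by
      have heq : (∫⁻ t in Set.Ioc a b, ENNReal.ofReal (Real.sqrt t * |f' t|) ^ (2 : ℝ))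
          = ∫⁻ t in Set.Ioc a b, ENNReal.ofReal (t * f' t ^ 2) := by
        refine setLIntegral_congr_fun measurableSet_Ioc (fun t ht => ?_)
        have ht0 : 0 < t := lt_trans ha ht.1
        rw [ENNReal.ofReal_rpow_of_nonneg (by positivity) (by norm_num)]
        congr 1
        rw [show ((2 : ℝ)) = ((2 : ℕ) : ℝ) by norm_num, Real.rpow_natCast, mul_pow, sq_abs,
          Real.sq_sqrt ht0.le]
      rw [heq, hAdef]
      exact lintegral_mono_set fun t ht => lt_trans ha ht.1
    have hJ : (∫⁻ t in Set.Ioc a b, ENNReal.ofReal (|f t| * |f' t|))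
        ≤ B ^ ((1 : ℝ) / 2) * A ^ ((1 : ℝ) / 2) := by
      rw [hprod]
      refine holder.trans ?_
      exact mul_le_mul' (ENNReal.rpow_le_rpow e1 (by norm_num))
        (ENNReal.rpow_le_rpow e2 (by norm_num))
    calc ENNReal.ofReal (f b ^ 2)
        ≤ ENNReal.ofReal (f a ^ 2)
          + 2 * ∫⁻ t in Set.Ioc a b, ENNReal.ofReal (|f t| * |f' t|) := by
          rw [← h3, ← h2]; exact h1
      _ ≤ ENNReal.ofReal (f a ^ 2) + 2 * (B ^ ((1 : ℝ) / 2) * A ^ ((1 : ℝ) / 2)) := by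
          gcongr
      _ = ENNReal.ofReal (f a ^ 2) + M := by rw [hMdef]; ring
  -- conclude via epsilon
  refine ENNReal.le_of_forall_pos_le_add fun ε hε hMlt => ?_
  obtain ⟨a, ha, hab, hsm⟩ := exists_small hB (show (0 : ℝ) < (ε : ℝ) by exact_mod_cast hε) hb
  calc ENNReal.ofReal (f b ^ 2) ≤ ENNReal.ofReal (f a ^ 2) + M := step a ha hab
    _ ≤ (ε : ℝ≥0∞) + M := by
        gcongr
        calc ENNReal.ofReal (f a ^ 2) ≤ ENNReal.ofReal (ε : ℝ) :=
              ENNReal.ofReal_le_ofReal hsm.le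
          _ = (ε : ℝ≥0∞) := ENNReal.ofReal_coe_nnreal
    _ = M + ε := add_comm _ _

/-- Limiting 1D Caffarelli–Kohn–Nirenberg type inequality: for `d ≥ 3` and
`2* = 2d/(d−2)` there is `C > 0` such that for every absolutely continuous `f : (0,∞) → ℝ`
with `∫_0^∞ r |f'|² dr < ∞` and `∫_0^∞ |f|²/r dr < ∞`,
`(∫_0^∞ r |f'|² dr)^{1/d} (∫_0^∞ |f|²/r dr)^{1−1/d} ≥ C (∫_0^∞ |f|^{2*}/r dr)^{2/2*}`. -/
theorem stmt12 (d : ℕ) (hd : 3 ≤ d) :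
    ∃ C : ℝ, 0 < C ∧
      ∀ f f' : ℝ → ℝ, ACDerivOn f f' →
        (∫⁻ r in Set.Ioi (0 : ℝ), ENNReal.ofReal (r * f' r ^ 2)) < ⊤ →
        (∫⁻ r in Set.Ioi (0 : ℝ), ENNReal.ofReal (f r ^ 2 / r)) < ⊤ →
        ENNReal.ofReal C *
            (∫⁻ r in Set.Ioi (0 : ℝ),
                ENNReal.ofReal (|f r| ^ (2 * d / ((d : ℝ) - 2)) / r)) ^
              (2 / (2 * d / ((d : ℝ) - 2))) ≤
          (∫⁻ r in Set.Ioi (0 : ℝ), ENNReal.ofReal (r * f' r ^ 2)) ^ ((1 : ℝ) / d) *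
            (∫⁻ r in Set.Ioi (0 : ℝ), ENNReal.ofReal (f r ^ 2 / r)) ^ (1 - (1 : ℝ) / d) := by
  refine ⟨1 / 2, by norm_num, ?_⟩
  intro f f' hac hA hB
  have hd3 : (3 : ℝ) ≤ (d : ℝ) := by exact_mod_cast hd
  have hd0 : (0 : ℝ) < d := by linarith
  have hdm2 : (0 : ℝ) < (d : ℝ) - 2 := by linarith
  set p : ℝ := 2 * (d : ℝ) / ((d : ℝ) - 2) with hpdef
  have hp_pos : (0 : ℝ) < p := by
    rw [hpdef]; positivity
  have htp : (0 : ℝ) < 2 / p := by positivity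
  set e : ℝ := 2 / ((d : ℝ) - 2) with hedef
  have he_pos : (0 : ℝ) < e := by rw [hedef]; positivity
  set A := ∫⁻ r in Set.Ioi (0 : ℝ), ENNReal.ofReal (r * f' r ^ 2) with hAdef
  set B := ∫⁻ r in Set.Ioi (0 : ℝ), ENNReal.ofReal (f r ^ 2 / r) with hBdef
  set M : ℝ≥0∞ := 2 * B ^ ((1 : ℝ) / 2) * A ^ ((1 : ℝ) / 2) with hMdef
  have hMtop : M ≠ ⊤ := by
    rw [hMdef]
    exact ENNReal.mul_ne_top
      (ENNReal.mul_ne_top (by norm_num)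
        (ENNReal.rpow_ne_top_of_nonneg (by norm_num) hB.ne))
      (ENNReal.rpow_ne_top_of_nonneg (by norm_num) hA.ne)
  have hMb : ∀ r ∈ Set.Ioi (0 : ℝ), ENNReal.ofReal (f r ^ 2) ≤ M := fun r hr =>
    sup_bound hac hA hB hr
  -- pointwise bound
  have hpt : ∀ r ∈ Set.Ioi (0 : ℝ),
      ENNReal.ofReal (|f r| ^ p / r) ≤ M ^ e * ENNReal.ofReal (f r ^ 2 / r) := by
    intro r hr
    have hid : |f r| ^ p / r = (f r ^ 2) ^ e * (f r ^ 2 / r) := by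
      rw [← mul_div_assoc]
      congr 1
      have h2 : ((|f r| ^ 2 : ℝ)) ^ e * (|f r| ^ 2) = |f r| ^ p := by
        rw [← Real.rpow_natCast |f r| 2, ← Real.rpow_mul (abs_nonneg _),
          ← Real.rpow_add_of_nonneg (abs_nonneg _) (by positivity) (by positivity)]
        congr 1
        rw [hedef, hpdef]
        push_cast
        field_simp
        ring
      rw [← sq_abs (f r)] at *
      exact h2.symm
    rw [hid, ENNReal.ofReal_mul (by positivity),
      ← ENNReal.ofReal_rpow_of_nonneg (sq_nonneg _) he_pos.le]
    exact mul_le_mul_left (ENNReal.rpow_le_rpow (hMb r hr) he_pos.le) _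
  set L := ∫⁻ r in Set.Ioi (0 : ℝ), ENNReal.ofReal (|f r| ^ p / r) with hLdef
  have hL : L ≤ M ^ e * B := by
    calc L ≤ ∫⁻ r in Set.Ioi (0 : ℝ), M ^ e * ENNReal.ofReal (f r ^ 2 / r) := by
          rw [hLdef]
          refine lintegral_mono_ae ?_
          filter_upwards [ae_restrict_mem measurableSet_Ioi] with r hr
          exact hpt r hr
      _ = M ^ e * B := by
          rw [hBdef, lintegral_const_mul' _ _ (ENNReal.rpow_ne_top_of_nonneg he_pos.le hMtop)]
  -- exponent computations
  have hc1 : e * (2 / p) = 1 / (d : ℝ) * 2 := by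
    rw [hedef, hpdef]; field_simp
  have hc2 : (1 : ℝ) / 2 * (1 / (d : ℝ) * 2) = 1 / (d : ℝ) := by ring
  have hc3 : (1 : ℝ) / d + 2 / p = 1 - 1 / (d : ℝ) := by
    rw [hpdef]; field_simp; ring
  have key : ENNReal.ofReal (1 / 2) * (M ^ e * B) ^ (2 / p)
      ≤ A ^ ((1 : ℝ) / d) * B ^ (1 - (1 : ℝ) / d) := by
    have h1 : (M ^ e * B) ^ (2 / p) = M ^ (1 / (d : ℝ) * 2) * B ^ (2 / p) := by
      rw [ENNReal.mul_rpow_of_nonneg _ _ htp.le, ← ENNReal.rpow_mul, hc1]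
    have h2 : M ^ ((1 : ℝ) / (d : ℝ) * 2) =
        2 ^ ((1 : ℝ) / (d : ℝ) * 2) * B ^ ((1 : ℝ) / d) * A ^ ((1 : ℝ) / d) := by
      rw [hMdef, ENNReal.mul_rpow_of_nonneg _ _ (by positivity),
        ENNReal.mul_rpow_of_nonneg _ _ (by positivity), ← ENNReal.rpow_mul,
        ← ENNReal.rpow_mul, hc2]
    have h3 : B ^ ((1 : ℝ) / d) * B ^ ((2 : ℝ) / p) = B ^ (1 - (1 : ℝ) / d) := by
      rw [← ENNReal.rpow_add_of_nonneg _ _ (by positivity) htp.le, hc3]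
    have h4 : ENNReal.ofReal (1 / 2) * (2 : ℝ≥0∞) ^ ((1 : ℝ) / (d : ℝ) * 2) ≤ 1 := by
      have : (2 : ℝ≥0∞) ^ ((1 : ℝ) / (d : ℝ) * 2) ≤ 2 := by
        calc (2 : ℝ≥0∞) ^ ((1 : ℝ) / (d : ℝ) * 2) ≤ (2 : ℝ≥0∞) ^ (1 : ℝ) :=
              ENNReal.rpow_le_rpow_of_exponent_le one_le_two
                (by rw [div_mul_eq_mul_div, one_mul, div_le_one hd0]; linarith)
          _ = 2 := ENNReal.rpow_one 2
      calc ENNReal.ofReal (1 / 2) * (2 : ℝ≥0∞) ^ ((1 : ℝ) / (d : ℝ) * 2)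
          ≤ ENNReal.ofReal (1 / 2) * 2 := mul_le_mul_right this _
        _ = ENNReal.ofReal (1 / 2) * ENNReal.ofReal 2 := by norm_num
        _ = ENNReal.ofReal 1 := by rw [← ENNReal.ofReal_mul (by norm_num)]; norm_num
        _ = 1 := ENNReal.ofReal_one
    calc ENNReal.ofReal (1 / 2) * (M ^ e * B) ^ (2 / p)
        = (ENNReal.ofReal (1 / 2) * 2 ^ ((1 : ℝ) / (d : ℝ) * 2))
            * (A ^ ((1 : ℝ) / d) * (B ^ ((1 : ℝ) / d) * B ^ ((2 : ℝ) / p))) := by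
          rw [h1, h2]; ring
      _ = (ENNReal.ofReal (1 / 2) * 2 ^ ((1 : ℝ) / (d : ℝ) * 2))
            * (A ^ ((1 : ℝ) / d) * B ^ (1 - (1 : ℝ) / d)) := by rw [h3]
      _ ≤ 1 * (A ^ ((1 : ℝ) / d) * B ^ (1 - (1 : ℝ) / d)) := mul_le_mul_left h4 _
      _ = A ^ ((1 : ℝ) / d) * B ^ (1 - (1 : ℝ) / d) := one_mul _
  calc ENNReal.ofReal (1 / 2) * L ^ (2 / p)
      ≤ ENNReal.ofReal (1 / 2) * (M ^ e * B) ^ (2 / p) :=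
        mul_le_mul_right (ENNReal.rpow_le_rpow hL htp.le) _
    _ ≤ A ^ ((1 : ℝ) / d) * B ^ (1 - (1 : ℝ) / d) := key
end
end

section
/- Let f : (0,∞) → [0,∞) be absolutely continuous with lim_{r→0} f(r) = 0 and lim_{r→∞} f(r) = 0. Then ( ∫_0^∞ r |f'(r)|² dr ) · ( ∫_0^∞ |f(r)|²/r dr ) ≥ ‖f‖_{L^∞(0,∞)}⁴. -/
open MeasureTheory
open scoped ENNReal

noncomputable section

namespace Stmt13Aux

variable {f f' : ℝ → ℝ}

lemma contAt (hAC : ACDerivOn f f') {x : ℝ} (hx : 0 < x) : ContinuousAt f x := by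
  have ha : (0:ℝ) < x/2 := by linarith
  have hab : x/2 ≤ x+1 := by linarith
  have hint : IntegrableOn f' (Set.Icc (x/2) (x+1)) := (hAC _ _ ha hab).1
  have hcont := intervalIntegral.continuousOn_primitive (f := f') (a := x/2) (b := x+1)
    (μ := volume) hint
  have heq : Set.EqOn f (fun t => f (x/2) + ∫ s in Set.Ioc (x/2) t, f' s)
      (Set.Icc (x/2) (x+1)) := by
    intro t ht
    have h2 := (hAC (x/2) t ha ht.1).2
    rw [intervalIntegral.integral_of_le ht.1] at h2
    simp only
    linarith
  have hC : ContinuousOn f (Set.Icc (x/2) (x+1)) :=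
    (continuousOn_const.add hcont).congr heq
  exact hC.continuousAt (Icc_mem_nhds (by linarith) (by linarith))

lemma keyIdentity (hAC : ACDerivOn f f') {a b : ℝ} (ha : 0 < a) (hab : a ≤ b) :
    f b ^ 2 - f a ^ 2 = 2 * ∫ t in Set.Ioc a b, f t * f' t := by
  set ν := volume.restrict (Set.Ioc a b) with hν
  have hg : Integrable f' ν := ((hAC a b ha hab).1).mono_set Set.Ioc_subset_Icc_self
  have hfc : ContinuousOn f (Set.Icc a b) := fun t ht =>
    (contAt hAC (lt_of_lt_of_le ha ht.1)).continuousWithinAt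
  have hFTC : ∀ t ∈ Set.Icc a b, f t - f a = ∫ s in Set.Ioc a t, f' s := by
    intro t ht
    exact ((hAC a t ha ht.1).2).trans (intervalIntegral.integral_of_le ht.1)
  set v : ℝ × ℝ → ℝ := fun p => f' p.1 * f' p.2 with hvdef
  have hv : Integrable v (ν.prod ν) := hg.mul_prod hg
  set H : ℝ × ℝ → ℝ := {p : ℝ × ℝ | p.1 ≤ p.2}.indicator v with hHdef
  set H' : ℝ × ℝ → ℝ := {p : ℝ × ℝ | p.2 ≤ p.1}.indicator v with hH'def
  have hSm : MeasurableSet {p : ℝ × ℝ | p.1 ≤ p.2} :=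
    measurableSet_le measurable_fst measurable_snd
  have hSm' : MeasurableSet {p : ℝ × ℝ | p.2 ≤ p.1} :=
    measurableSet_le measurable_snd measurable_fst
  have hH : Integrable H (ν.prod ν) := hv.indicator hSm
  have hH' : Integrable H' (ν.prod ν) := hv.indicator hSm'
  set I := ∫ t, f' t ∂ν with hIdef
  have hI : I = f b - f a := ((hAC a b ha hab).2.trans
    (intervalIntegral.integral_of_le hab)).symm
  -- swap trick
  have hswap : ∀ z : ℝ × ℝ, H' z = H z.swap := by
    intro z
    by_cases h : z.2 ≤ z.1 <;>
      simp [hHdef, hH'def, Set.indicator, h, hvdef, mul_comm, Prod.swap]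
  have hH'H : ∫ p, H' p ∂(ν.prod ν) = ∫ p, H p ∂(ν.prod ν) := by
    calc ∫ p, H' p ∂(ν.prod ν) = ∫ p, H p.swap ∂(ν.prod ν) := by
          simp only [hswap]
      _ = ∫ p, H p ∂(ν.prod ν) := integral_prod_swap H
  -- Fubini: ∫ t, ∫ s, H (s, t)
  have hHswapInt : Integrable (Function.uncurry fun t s => H (s, t)) (ν.prod ν) := hH.swap
  have h1 : ∫ t, (∫ s, H (s, t) ∂ν) ∂ν = ∫ p, H p ∂(ν.prod ν) := by
    rw [MeasureTheory.integral_integral hHswapInt, ← integral_prod_swap H]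
    rfl
  -- inner integral
  have h2 : ∀ t ∈ Set.Ioc a b, (∫ s, H (s, t) ∂ν) = f' t * (f t - f a) := by
    intro t ht
    have hind : (fun s => H (s, t)) = fun s => (Set.Iic t).indicator f' s * f' t := by
      funext s
      by_cases h : s ≤ t <;> simp [hHdef, Set.indicator, h, hvdef]
    rw [hind, integral_mul_const, integral_indicator measurableSet_Iic]
    rw [hν, Measure.restrict_restrict measurableSet_Iic]
    have hset : Set.Iic t ∩ Set.Ioc a b = Set.Ioc a t := by
      rw [Set.inter_comm, Set.Ioc_inter_Iic, min_eq_right ht.2]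
    rw [hset, ← hFTC t ⟨le_of_lt ht.1, ht.2⟩, mul_comm]
  have hK : ∫ t, f' t * (f t - f a) ∂ν = ∫ p, H p ∂(ν.prod ν) := by
    rw [← h1]
    refine setIntegral_congr_fun measurableSet_Ioc ?_
    intro t ht
    exact (h2 t ht).symm
  -- sum of the two halves
  have hDm : MeasurableSet {p : ℝ × ℝ | p.1 = p.2} :=
    measurableSet_eq_fun measurable_fst measurable_snd
  have hD : (ν.prod ν) {p : ℝ × ℝ | p.1 = p.2} = 0 := by
    rw [Measure.prod_apply hDm]
    have hfib : ∀ x : ℝ, ν (Prod.mk x ⁻¹' {p : ℝ × ℝ | p.1 = p.2}) = 0 := by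
      intro x
      have : Prod.mk x ⁻¹' {p : ℝ × ℝ | p.1 = p.2} = {x} := by
        ext y; simp [eq_comm]
      rw [this]
      exact le_antisymm (le_trans (Measure.restrict_le_self _) (by simp)) zero_le
    simp [hfib]
  have hsum : ∫ p, H p ∂(ν.prod ν) + ∫ p, H' p ∂(ν.prod ν) = I * I := by
    rw [← integral_add hH hH']
    have : ∫ p, (H p + H' p) ∂(ν.prod ν) = ∫ p, v p ∂(ν.prod ν) := by
      apply integral_congr_ae
      have hae : ∀ᵐ p ∂(ν.prod ν), p ∉ {p : ℝ × ℝ | p.1 = p.2} :=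
        (measure_eq_zero_iff_ae_notMem).1 hD
      filter_upwards [hae] with z hz
      rcases lt_or_gt_of_ne (fun h => hz h) with h | h
      · simp [hHdef, hH'def, Set.indicator, le_of_lt h, not_le.2 h]
      · simp [hHdef, hH'def, Set.indicator, le_of_lt h, not_le.2 h]
    rw [this, hvdef]
    exact integral_prod_mul f' f'
  have h2K : 2 * ∫ t, f' t * (f t - f a) ∂ν = I * I := by
    rw [hK, two_mul]
    nth_rewrite 2 [← hH'H]
    exact hsum
  -- split ∫ f * f'
  have hfm : AEStronglyMeasurable f ν :=
    (hfc.mono Set.Ioc_subset_Icc_self).aestronglyMeasurable measurableSet_Ioc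
  obtain ⟨C, hC⟩ := (isCompact_Icc (a := a) (b := b)).exists_bound_of_continuousOn hfc
  have hbd : ∀ᵐ t ∂ν, ‖f t - f a‖ ≤ C + ‖f a‖ := by
    filter_upwards [self_mem_ae_restrict (measurableSet_Ioc : MeasurableSet (Set.Ioc a b))]
      with t ht
    have h1 : ‖f t‖ ≤ C := hC t (Set.Ioc_subset_Icc_self ht)
    calc ‖f t - f a‖ ≤ ‖f t‖ + ‖f a‖ := norm_sub_le _ _
      _ ≤ C + ‖f a‖ := by linarith
  have hint1 : Integrable (fun t => (f t - f a) * f' t) ν :=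
    hg.bdd_mul (hfm.sub aestronglyMeasurable_const) hbd
  have hsplit : ∫ t, f t * f' t ∂ν
      = (∫ t, f' t * (f t - f a) ∂ν) + f a * I := by
    have : (fun t => f t * f' t) = fun t => (f t - f a) * f' t + f a * f' t := by
      funext t; ring
    rw [this, integral_add hint1 (hg.const_mul (f a)), integral_const_mul]
    congr 1
    apply integral_congr_ae
    filter_upwards with t
    ring
  -- conclude
  have hIoc : (∫ t in Set.Ioc a b, f t * f' t) = ∫ t, f t * f' t ∂ν := rfl
  rw [hIoc, hsplit]
  have := h2K
  rw [hI] at this ⊢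
  nlinarith [this]


lemma ioiUnion : Set.Ioi (0:ℝ) = ⋃ n : ℕ, Set.Icc ((n:ℝ)+1)⁻¹ ((n:ℝ)+1) := by
  ext x
  simp only [Set.mem_Ioi, Set.mem_iUnion, Set.mem_Icc]
  constructor
  · intro hx
    obtain ⟨n, hn⟩ := exists_nat_ge (max x x⁻¹)
    have hn1 : max x x⁻¹ ≤ (n:ℝ) + 1 := by linarith
    refine ⟨n, ?_, le_trans (le_max_left _ _) hn1⟩
    have hxinv : x⁻¹ ≤ (n:ℝ)+1 := le_trans (le_max_right _ _) hn1
    have hxx : x * x⁻¹ = 1 := mul_inv_cancel₀ (ne_of_gt hx)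
    rw [inv_eq_one_div, div_le_iff₀ (by positivity)]
    nlinarith
  · rintro ⟨n, h1, _⟩
    exact lt_of_lt_of_le (by positivity) h1

lemma f'Meas (hAC : ACDerivOn f f') :
    AEMeasurable f' (volume.restrict (Set.Ioi (0:ℝ))) := by
  rw [ioiUnion]
  rw [aemeasurable_iUnion_iff]
  intro n
  have h1 : (0:ℝ) < ((n:ℝ)+1)⁻¹ := by positivity
  have h2 : ((n:ℝ)+1)⁻¹ ≤ (n:ℝ)+1 := by
    have : (1:ℝ) ≤ (n:ℝ)+1 := by
      have := Nat.cast_nonneg (α := ℝ) n; linarith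
    calc ((n:ℝ)+1)⁻¹ ≤ 1 := by
          rw [inv_le_one_iff₀]; right; exact this
      _ ≤ (n:ℝ)+1 := this
  exact ((hAC _ _ h1 h2).1).aestronglyMeasurable.aemeasurable

lemma lhsZero {f : ℝ → ℝ} (hf0 : ∀ᵐ x ∂(volume.restrict (Set.Ioi (0:ℝ))), f x = 0) :
    eLpNorm f ⊤ (volume.restrict (Set.Ioi (0:ℝ))) = 0 := by
  have : f =ᵐ[volume.restrict (Set.Ioi (0:ℝ))] (0 : ℝ → ℝ) := hf0
  rw [eLpNorm_congr_ae this, eLpNorm_zero]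

end Stmt13Aux

open Stmt13Aux in
/-- If `f : (0,∞) → [0,∞)` is absolutely continuous with
`f(r) → 0` as `r → 0⁺` and as `r → ∞`, then
`(∫_0^∞ r |f'|² dr) (∫_0^∞ |f|²/r dr) ≥ ‖f‖_{L^∞(0,∞)}⁴`. -/
theorem stmt13 (f f' : ℝ → ℝ) (hAC : ACDerivOn f f')
    (hnonneg : ∀ r ∈ Set.Ioi (0 : ℝ), 0 ≤ f r)
    (hlim0 : Filter.Tendsto f (nhdsWithin 0 (Set.Ioi 0)) (nhds 0))
    (hliminf : Filter.Tendsto f Filter.atTop (nhds 0)) :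
    eLpNorm f ⊤ (volume.restrict (Set.Ioi 0)) ^ 4 ≤
      (∫⁻ r in Set.Ioi (0 : ℝ), ENNReal.ofReal (r * f' r ^ 2)) *
        (∫⁻ r in Set.Ioi (0 : ℝ), ENNReal.ofReal (f r ^ 2 / r)) := by
  set μ' := volume.restrict (Set.Ioi (0:ℝ)) with hμ'
  set A := ∫⁻ r in Set.Ioi (0 : ℝ), ENNReal.ofReal (r * f' r ^ 2) with hAdef
  set B := ∫⁻ r in Set.Ioi (0 : ℝ), ENNReal.ofReal (f r ^ 2 / r) with hBdef
  have hf'm : AEMeasurable f' μ' := f'Meas hAC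
  have hfc : ∀ x ∈ Set.Ioi (0:ℝ), ContinuousAt f x := fun x hx => contAt hAC hx
  have hfm : AEMeasurable f μ' := by
    have : ContinuousOn f (Set.Ioi (0:ℝ)) := fun x hx => (hfc x hx).continuousWithinAt
    exact this.aemeasurable measurableSet_Ioi
  -- Case A = 0
  by_cases hA0 : A = 0
  · have hmeasA : AEMeasurable (fun t => ENNReal.ofReal (t * f' t ^ 2)) μ' := by
      apply ENNReal.measurable_ofReal.comp_aemeasurable
      exact aemeasurable_id.mul (hf'm.mul hf'm |>.congr (by
        filter_upwards with t; rw [← sq]; rfl))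
    have hae0 : ∀ᵐ t ∂μ', ENNReal.ofReal (t * f' t ^ 2) = 0 :=
      (lintegral_eq_zero_iff' hmeasA).1 hA0
    have hf'0 : ∀ᵐ t ∂μ', f' t = 0 := by
      filter_upwards [hae0, self_mem_ae_restrict (measurableSet_Ioi : MeasurableSet (Set.Ioi (0:ℝ)))]
        with t h1 h2
      rw [ENNReal.ofReal_eq_zero] at h1
      have ht : (0:ℝ) < t := h2
      have hsq : f' t ^ 2 = 0 := le_antisymm (by nlinarith) (sq_nonneg _)
      exact pow_eq_zero_iff (by norm_num) |>.1 hsq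
    have hconst : ∀ x y : ℝ, 0 < x → x ≤ y → f y = f x := by
      intro x y hx hxy
      have h2 := (hAC x y hx hxy).2
      have hz : ∫ t in x..y, f' t = 0 := by
        rw [intervalIntegral.integral_of_le hxy]
        apply integral_eq_zero_of_ae
        exact ae_restrict_of_ae_restrict_of_subset
          (fun t ht => lt_trans hx ht.1) hf'0
      linarith
    have hzero : ∀ x ∈ Set.Ioi (0:ℝ), f x = 0 := by
      intro x hx
      have hev : f =ᶠ[Filter.atTop] fun _ => f x :=
        Filter.eventually_atTop.2 ⟨x, fun t ht => hconst x t hx ht⟩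
      have : Filter.Tendsto (fun _ : ℝ => f x) Filter.atTop (nhds 0) :=
        hliminf.congr' hev
      exact tendsto_nhds_unique tendsto_const_nhds this
    have h0 : eLpNorm f ⊤ μ' = 0 :=
      lhsZero ((ae_restrict_iff' measurableSet_Ioi).2 (Filter.Eventually.of_forall hzero))
    rw [h0]
    simp
  -- Case B = 0
  by_cases hB0 : B = 0
  · have hmeasB : AEMeasurable (fun t => ENNReal.ofReal (f t ^ 2 / t)) μ' := by
      apply ENNReal.measurable_ofReal.comp_aemeasurable
      exact ((hfm.mul hfm).congr (by filter_upwards with t; rw [← sq])).mul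
        (aemeasurable_id.inv) |>.congr (by
          filter_upwards with t; simp [div_eq_mul_inv])
    have hae0 : ∀ᵐ t ∂μ', ENNReal.ofReal (f t ^ 2 / t) = 0 :=
      (lintegral_eq_zero_iff' hmeasB).1 hB0
    have hf0 : ∀ᵐ t ∂μ', f t = 0 := by
      filter_upwards [hae0, self_mem_ae_restrict (measurableSet_Ioi : MeasurableSet (Set.Ioi (0:ℝ)))]
        with t h1 h2
      rw [ENNReal.ofReal_eq_zero] at h1
      have ht : (0:ℝ) < t := h2
      have hle : f t ^ 2 / t ≤ 0 := h1
      have hsq : f t ^ 2 = 0 := le_antisymm (by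
        have := (div_nonpos_iff).1 hle
        rcases this with ⟨_,h⟩|⟨h,_⟩
        · linarith
        · exact h
        ) (sq_nonneg _)
      exact pow_eq_zero_iff (by norm_num) |>.1 hsq
    have h0 : eLpNorm f ⊤ μ' = 0 := lhsZero (f := f) hf0
    rw [h0]
    simp
  -- Case A = ⊤ or B = ⊤
  by_cases hAtop : A = ⊤
  · rw [hAtop, ENNReal.top_mul hB0]; exact le_top
  by_cases hBtop : B = ⊤
  · rw [hBtop, ENNReal.mul_top hA0]; exact le_top
  -- Main case: A, B nonzero and finite
  set φ : ℝ → ℝ≥0∞ := fun t => ENNReal.ofReal (Real.sqrt t * |f' t|) with hφdef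
  set ψ : ℝ → ℝ≥0∞ := fun t => ENNReal.ofReal (|f t| / Real.sqrt t) with hψdef
  have hφm : AEMeasurable φ μ' :=
    ENNReal.measurable_ofReal.comp_aemeasurable
      ((Real.continuous_sqrt.measurable.aemeasurable).mul (continuous_abs.measurable.comp_aemeasurable hf'm))
  have hψm : AEMeasurable ψ μ' :=
    ENNReal.measurable_ofReal.comp_aemeasurable
      ((continuous_abs.measurable.comp_aemeasurable hfm).div (Real.continuous_sqrt.measurable.aemeasurable))
  have hconj : Real.HolderConjugate 2 2 := Real.HolderConjugate.two_two
  have hHolder := ENNReal.lintegral_mul_le_Lp_mul_Lq μ' hconj hφm hψm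
  have hφ2 : (∫⁻ t, φ t ^ (2:ℝ) ∂μ') = A := by
    rw [hAdef]
    apply lintegral_congr_ae
    filter_upwards [self_mem_ae_restrict (measurableSet_Ioi : MeasurableSet (Set.Ioi (0:ℝ)))]
      with t ht
    have ht0 : (0:ℝ) ≤ t := le_of_lt ht
    rw [hφdef]
    simp only
    rw [ENNReal.ofReal_rpow_of_nonneg (by positivity) (by norm_num)]
    congr 1
    rw [show ((2:ℝ)) = ((2:ℕ):ℝ) by norm_num, Real.rpow_natCast]
    rw [mul_pow, Real.sq_sqrt ht0, sq_abs]
  have hψ2 : (∫⁻ t, ψ t ^ (2:ℝ) ∂μ') = B := by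
    rw [hBdef]
    apply lintegral_congr_ae
    filter_upwards [self_mem_ae_restrict (measurableSet_Ioi : MeasurableSet (Set.Ioi (0:ℝ)))]
      with t ht
    have ht0 : (0:ℝ) < t := ht
    rw [hψdef]
    simp only
    rw [ENNReal.ofReal_rpow_of_nonneg (by positivity) (by norm_num)]
    congr 1
    rw [show ((2:ℝ)) = ((2:ℕ):ℝ) by norm_num, Real.rpow_natCast]
    rw [div_pow, Real.sq_sqrt (le_of_lt ht0), sq_abs]
  set L := ∫⁻ t, ENNReal.ofReal |f t * f' t| ∂μ' with hLdef
  have hmulae : ∀ᵐ t ∂μ', ENNReal.ofReal |f t * f' t| = (φ * ψ) t := by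
    filter_upwards [self_mem_ae_restrict (measurableSet_Ioi : MeasurableSet (Set.Ioi (0:ℝ)))]
      with t ht
    have ht0 : (0:ℝ) < t := ht
    have hs : Real.sqrt t ≠ 0 := ne_of_gt (Real.sqrt_pos.2 ht0)
    have : (Real.sqrt t * |f' t|) * (|f t| / Real.sqrt t) = |f t * f' t| := by
      rw [abs_mul]; field_simp
    simp only [Pi.mul_apply, hφdef, hψdef]
    rw [← ENNReal.ofReal_mul (by positivity), this]
  have hL : L ≤ A ^ (1/2:ℝ) * B ^ (1/2:ℝ) := by
    calc L = ∫⁻ t, (φ * ψ) t ∂μ' := lintegral_congr_ae hmulae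
      _ ≤ (∫⁻ t, φ t ^ (2:ℝ) ∂μ') ^ (1/(2:ℝ)) * (∫⁻ t, ψ t ^ (2:ℝ) ∂μ') ^ (1/(2:ℝ)) := hHolder
      _ = A ^ (1/2:ℝ) * B ^ (1/2:ℝ) := by rw [hφ2, hψ2]
  have hABfin : A ^ (1/2:ℝ) * B ^ (1/2:ℝ) ≠ ⊤ :=
    ENNReal.mul_ne_top (ENNReal.rpow_ne_top_of_nonneg (by norm_num) hAtop)
      (ENNReal.rpow_ne_top_of_nonneg (by norm_num) hBtop)
  have hLtop : L ≠ ⊤ := ne_top_of_le_ne_top hABfin hL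
  set P := A.toReal * B.toReal with hPdef
  have hP0 : 0 ≤ P := mul_nonneg ENNReal.toReal_nonneg ENNReal.toReal_nonneg
  have hLP : L.toReal ≤ Real.sqrt P := by
    calc L.toReal ≤ (A ^ (1/2:ℝ) * B ^ (1/2:ℝ)).toReal := ENNReal.toReal_mono hABfin hL
      _ = A.toReal ^ (1/2:ℝ) * B.toReal ^ (1/2:ℝ) := by
          rw [ENNReal.toReal_mul, ← ENNReal.toReal_rpow, ← ENNReal.toReal_rpow]
      _ = Real.sqrt P := by
          rw [← Real.sqrt_eq_rpow, ← Real.sqrt_eq_rpow,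
            ← Real.sqrt_mul ENNReal.toReal_nonneg]
  have hseg : ∀ c d : ℝ, 0 < c →
      (∫⁻ t in Set.Ioc c d, ENNReal.ofReal |f t * f' t|) ≤ L :=
    fun c d hc => lintegral_mono_set (fun t ht => lt_trans hc ht.1)
  have habs : ∀ c d : ℝ, 0 < c →
      |∫ t in Set.Ioc c d, f t * f' t|
        ≤ (∫⁻ t in Set.Ioc c d, ENNReal.ofReal |f t * f' t|).toReal := by
    intro c d _
    have := MeasureTheory.norm_integral_le_lintegral_norm
      (μ := volume.restrict (Set.Ioc c d)) (fun t => f t * f' t)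
    simpa [Real.norm_eq_abs, abs_mul] using this
  have hpt : ∀ x, 0 < x → f x ^ 2 ≤ L.toReal := by
    intro x hx
    have hstep : ∀ c ∈ Set.Ioc (0:ℝ) x, ∀ d ∈ Set.Ici x,
        2 * f x ^ 2 ≤ f c ^ 2 + f d ^ 2 + 2 * L.toReal := by
      intro c hc d hd
      have e1 : f x ^ 2 - f c ^ 2 = 2 * ∫ t in Set.Ioc c x, f t * f' t :=
        keyIdentity hAC hc.1 hc.2
      have e2 : f d ^ 2 - f x ^ 2 = 2 * ∫ t in Set.Ioc x d, f t * f' t :=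
        keyIdentity hAC (lt_of_lt_of_le hc.1 hc.2) hd
      set P1 := ∫⁻ t in Set.Ioc c x, ENNReal.ofReal |f t * f' t| with hP1
      set P2 := ∫⁻ t in Set.Ioc x d, ENNReal.ofReal |f t * f' t| with hP2
      have hP1t : P1 ≠ ⊤ := ne_top_of_le_ne_top hLtop (hseg _ _ hc.1)
      have hP2t : P2 ≠ ⊤ := ne_top_of_le_ne_top hLtop (hseg _ _ (lt_of_lt_of_le hc.1 hc.2))
      have hsumP : P1 + P2 ≤ L := by
        rw [hP1, hP2, ← lintegral_union measurableSet_Ioc (Set.Ioc_disjoint_Ioc_of_le le_rfl),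
          Set.Ioc_union_Ioc_eq_Ioc hc.2 hd]
        exact hseg _ _ hc.1
      have ht1 := habs c x hc.1
      have ht2 := habs x d (lt_of_lt_of_le hc.1 hc.2)
      have hPP : P1.toReal + P2.toReal ≤ L.toReal := by
        rw [← ENNReal.toReal_add hP1t hP2t]
        exact ENNReal.toReal_mono hLtop hsumP
      have a1 := abs_le.1 ht1
      have a2 := abs_le.1 ht2
      linarith [a1.1, a1.2, a2.1, a2.2]
    have hstep2 : ∀ d ∈ Set.Ici x, 2 * f x ^ 2 ≤ f d ^ 2 + 2 * L.toReal := by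
      intro d hd
      have htend : Filter.Tendsto (fun c => f c ^ 2 + (f d ^ 2 + 2 * L.toReal))
          (nhdsWithin 0 (Set.Ioi 0)) (nhds (0 + (f d ^ 2 + 2 * L.toReal))) := by
        apply Filter.Tendsto.add _ tendsto_const_nhds
        simpa using hlim0.pow 2
      have hev : ∀ᶠ c in nhdsWithin 0 (Set.Ioi 0),
          2 * f x ^ 2 ≤ f c ^ 2 + (f d ^ 2 + 2 * L.toReal) := by
        filter_upwards [Ioc_mem_nhdsGT_of_mem (Set.mem_Ico.2 ⟨le_refl 0, hx⟩)] with c hc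
        linarith [hstep c hc d hd]
      have := ge_of_tendsto htend hev
      linarith
    have htend2 : Filter.Tendsto (fun d => f d ^ 2 + 2 * L.toReal) Filter.atTop
        (nhds (0 + 2 * L.toReal)) := by
      apply Filter.Tendsto.add _ tendsto_const_nhds
      simpa using hliminf.pow 2
    have hev2 : ∀ᶠ d in Filter.atTop, 2 * f x ^ 2 ≤ f d ^ 2 + 2 * L.toReal := by
      filter_upwards [Filter.eventually_ge_atTop x] with d hd
      exact hstep2 d hd
    have := ge_of_tendsto htend2 hev2
    linarith
  set C := Real.sqrt (Real.sqrt P) with hCdef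
  have hbound : ∀ᵐ t ∂μ', ‖f t‖ ≤ C := by
    filter_upwards [self_mem_ae_restrict (measurableSet_Ioi : MeasurableSet (Set.Ioi (0:ℝ)))]
      with t ht
    have h1 : f t ^ 2 ≤ Real.sqrt P := le_trans (hpt t ht) hLP
    have h2 : |f t| = Real.sqrt (f t ^ 2) := (Real.sqrt_sq_eq_abs _).symm
    rw [Real.norm_eq_abs, h2, hCdef]
    exact Real.sqrt_le_sqrt h1
  have hsnorm : eLpNorm f ⊤ μ' ≤ ENNReal.ofReal C := by
    rw [eLpNorm_exponent_top]
    exact eLpNormEssSup_le_of_ae_bound hbound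
  calc eLpNorm f ⊤ μ' ^ 4 ≤ ENNReal.ofReal C ^ 4 := by gcongr
    _ = ENNReal.ofReal (C ^ 4) := by rw [← ENNReal.ofReal_pow (Real.sqrt_nonneg _)]
    _ = ENNReal.ofReal P := by
        congr 1
        have h1 : C ^ 2 = Real.sqrt P := Real.sq_sqrt (Real.sqrt_nonneg _)
        calc C ^ 4 = (C ^ 2) ^ 2 := by ring
          _ = Real.sqrt P ^ 2 := by rw [h1]
          _ = P := Real.sq_sqrt hP0
    _ = ENNReal.ofReal A.toReal * ENNReal.ofReal B.toReal :=
        ENNReal.ofReal_mul ENNReal.toReal_nonneg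
    _ = A * B := by rw [ENNReal.ofReal_toReal hAtop, ENNReal.ofReal_toReal hBtop]
end
end

section
/- Let d ≥ 3, 2* = 2d/(d−2), and for c > 0 define u_c : ℝ^d → ℝ by u_c(x) = |x|^{c−(d−2)/2} for |x| ≤ 1 and u_c(x) = |x|^{−c−(d−2)/2} for |x| > 1. Then: (a) if 0 < c ≤ (d−2)/2, the weak Lorentz norm satisfies ‖u_c‖_{L^{2*,∞}(ℝ^d)} = |B(0,1)|^{1/2*}; (b) if c > (d−2)/2, then ‖u_c‖_{L^{2*,∞}(ℝ^d)} < |B(0,1)|^{1/2*}. -/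
open MeasureTheory

noncomputable section

/-- The weak Lorentz quasi-norm `‖u‖_{L^{q,∞}} = sup_{s>0} s |{|u|>s}|^{1/q}`. -/
def weakNorm {d : ℕ} (q : ℝ) (u : EuclideanSpace ℝ (Fin d) → ℝ) : ℝ :=
  ⨆ s : Set.Ioi (0 : ℝ), (s : ℝ) * (volume {x | (s : ℝ) < |u x|}).toReal ^ (1 / q)

/-- The function `u_c(x) = |x|^{c−(d−2)/2}` for `|x| ≤ 1`, `|x|^{−c−(d−2)/2}` for `|x| > 1`. -/
def uc (d : ℕ) (c : ℝ) (x : EuclideanSpace ℝ (Fin d)) : ℝ :=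
  if ‖x‖ ≤ 1 then ‖x‖ ^ (c - ((d : ℝ) - 2) / 2) else ‖x‖ ^ (-c - ((d : ℝ) - 2) / 2)

open Metric Real

private lemma uc_nn (d : ℕ) (c : ℝ) (x : EuclideanSpace ℝ (Fin d)) : 0 ≤ uc d c x := by
  unfold uc; split <;> exact Real.rpow_nonneg (norm_nonneg _) _

private lemma uc_eq (d : ℕ) {c α : ℝ} (hα : ((d:ℝ)-2)/2 = α) (x : EuclideanSpace ℝ (Fin d)) :
    uc d c x = if ‖x‖ ≤ 1 then ‖x‖ ^ (c - α) else ‖x‖ ^ (-(c + α)) := by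
  unfold uc; rw [hα, show -c - α = -(c+α) from by ring]

private lemma vol_ball {d : ℕ} (hd : 1 ≤ d) {r : ℝ} (hr : 0 ≤ r) :
    volume (ball (0 : EuclideanSpace ℝ (Fin d)) r)
      = ENNReal.ofReal (r ^ d) * volume (ball (0 : EuclideanSpace ℝ (Fin d)) 1) := by
  have hd0 : 0 < d := hd
  have : Nontrivial (EuclideanSpace ℝ (Fin d)) :=
    ⟨EuclideanSpace.single ⟨0, hd0⟩ 1, 0, fun h => by
      simpa [EuclideanSpace.single_apply] using congrArg (fun v => v ⟨0, hd0⟩) h⟩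
  rw [Measure.addHaar_ball _ _ hr, finrank_euclideanSpace_fin]

private lemma vol_cball {d : ℕ} (hd : 1 ≤ d) {r : ℝ} (hr : 0 ≤ r) :
    volume (closedBall (0 : EuclideanSpace ℝ (Fin d)) r)
      = ENNReal.ofReal (r ^ d) * volume (ball (0 : EuclideanSpace ℝ (Fin d)) 1) := by
  have hd0 : 0 < d := hd
  have : Nontrivial (EuclideanSpace ℝ (Fin d)) :=
    ⟨EuclideanSpace.single ⟨0, hd0⟩ 1, 0, fun h => by
      simpa [EuclideanSpace.single_apply] using congrArg (fun v => v ⟨0, hd0⟩) h⟩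
  rw [Measure.addHaar_closedBall _ _ hr, finrank_euclideanSpace_fin]

private lemma vol_zero {d : ℕ} (hd : 1 ≤ d) :
    volume ({0} : Set (EuclideanSpace ℝ (Fin d))) = 0 := by
  have h := vol_cball (d := d) hd (le_refl (0:ℝ))
  rw [Metric.closedBall_zero] at h
  rw [h]
  have : d ≠ 0 := by omega
  simp [this]

/-- Case `c ≤ α`, `0 < s < 1`: the superlevel set has the volume of the ball of
radius `s ^ (-(c+α))⁻¹`. -/
private lemma volA {d : ℕ} (hd : 3 ≤ d) {c α s : ℝ} (hc : 0 < c) (hα : ((d:ℝ)-2)/2 = α)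
    (hcα : c ≤ α) (hs : 0 < s) (hs1 : s < 1) :
    volume {x : EuclideanSpace ℝ (Fin d) | s < uc d c x}
      = ENNReal.ofReal ((s ^ (-(c+α))⁻¹) ^ d)
        * volume (ball (0 : EuclideanSpace ℝ (Fin d)) 1) := by
  have hd3 : (3:ℝ) ≤ (d:ℝ) := by exact_mod_cast hd
  have hα0 : 0 < α := by rw [← hα]; linarith
  have hca : 0 < c + α := by linarith
  have hyneg : (-(c+α))⁻¹ < 0 := inv_lt_zero.mpr (by linarith)
  set R := s ^ (-(c+α))⁻¹ with hR
  have hR0 : 0 < R := rpow_pos_of_pos hs _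
  have hR1 : 1 < R := Real.one_lt_rpow_of_pos_of_lt_one_of_neg hs hs1 hyneg
  have hRs : R ^ (-(c+α)) = s := Real.rpow_inv_rpow hs.le (by linarith)
  have hsub2 : {x : EuclideanSpace ℝ (Fin d) | s < uc d c x} ⊆ ball 0 R := by
    intro x hx
    simp only [Set.mem_setOf_eq, uc_eq d hα] at hx
    rw [mem_ball_zero_iff]
    split_ifs at hx with h1
    · exact lt_of_le_of_lt h1 hR1
    · push_neg at h1
      have hx0 : 0 < ‖x‖ := lt_trans one_pos h1
      have h2 := Real.rpow_lt_rpow_of_neg hs hx hyneg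
      rwa [Real.rpow_rpow_inv (norm_nonneg x) (by linarith)] at h2
  have hsub1 : ball (0 : EuclideanSpace ℝ (Fin d)) R \ {0}
      ⊆ {x : EuclideanSpace ℝ (Fin d) | s < uc d c x} := by
    rintro x ⟨hxR, hx0⟩
    have hr0 : 0 < ‖x‖ := norm_pos_iff.mpr (by simpa using hx0)
    rw [mem_ball_zero_iff] at hxR
    simp only [Set.mem_setOf_eq, uc_eq d hα]
    split_ifs with h1
    · exact lt_of_lt_of_le hs1
        (Real.one_le_rpow_of_pos_of_le_one_of_nonpos hr0 h1 (by linarith))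
    · push_neg at h1
      have := Real.rpow_lt_rpow_of_neg hr0 hxR (show -(c+α) < 0 by linarith)
      rwa [hRs] at this
  apply le_antisymm
  · calc volume {x : EuclideanSpace ℝ (Fin d) | s < uc d c x}
        ≤ volume (ball (0 : EuclideanSpace ℝ (Fin d)) R) := measure_mono hsub2
      _ = _ := vol_ball (by omega) hR0.le
  · have h := measure_mono (μ := (volume : Measure (EuclideanSpace ℝ (Fin d)))) hsub1
    have hz : volume ({0} : Set (EuclideanSpace ℝ (Fin d))) = 0 := vol_zero (by omega)
    rwa [measure_diff_null hz, vol_ball (by omega) hR0.le] at h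

/-- For `α ≤ c`, `u_c ≤ 1` everywhere. -/
private lemma uc_le_one {d : ℕ} (hd : 3 ≤ d) {c α : ℝ} (hα : ((d:ℝ)-2)/2 = α)
    (hcα : α ≤ c) (x : EuclideanSpace ℝ (Fin d)) : uc d c x ≤ 1 := by
  have hd3 : (3:ℝ) ≤ (d:ℝ) := by exact_mod_cast hd
  have hα0 : 0 < α := by rw [← hα]; linarith
  rw [uc_eq d hα]
  split_ifs with h1
  · exact Real.rpow_le_one (norm_nonneg x) h1 (by linarith)
  · push_neg at h1
    exact Real.rpow_le_one_of_one_le_of_nonpos h1.le (by linarith)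

/-- Case `α ≤ c`, `1 ≤ s`: the superlevel set is empty. -/
private lemma emptyB {d : ℕ} (hd : 3 ≤ d) {c α s : ℝ} (hα : ((d:ℝ)-2)/2 = α)
    (hcα : α ≤ c) (hs : 1 ≤ s) :
    {x : EuclideanSpace ℝ (Fin d) | s < uc d c x} = ∅ := by
  ext x
  simp only [Set.mem_setOf_eq, Set.mem_empty_iff_false, iff_false, not_lt]
  exact (uc_le_one hd hα hcα x).trans hs

/-- Case `c < α`, `1 ≤ s`: the superlevel set is contained in the ball of radius
`s ^ (c - α)⁻¹`. -/
private lemma boundA2 {d : ℕ} (hd : 3 ≤ d) {c α s : ℝ} (hc : 0 < c) (hα : ((d:ℝ)-2)/2 = α)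
    (hcα : c < α) (hs : 1 ≤ s) :
    volume {x : EuclideanSpace ℝ (Fin d) | s < uc d c x}
      ≤ ENNReal.ofReal ((s ^ (c - α)⁻¹) ^ d)
        * volume (ball (0 : EuclideanSpace ℝ (Fin d)) 1) := by
  have hd3 : (3:ℝ) ≤ (d:ℝ) := by exact_mod_cast hd
  have hα0 : 0 < α := by rw [← hα]; linarith
  have hs0 : 0 < s := lt_of_lt_of_le one_pos hs
  have hzneg : (c - α)⁻¹ < 0 := inv_lt_zero.mpr (by linarith)
  have hsub : {x : EuclideanSpace ℝ (Fin d) | s < uc d c x} ⊆ ball 0 (s ^ (c - α)⁻¹) := by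
    intro x hx
    simp only [Set.mem_setOf_eq, uc_eq d hα] at hx
    rw [mem_ball_zero_iff]
    split_ifs at hx with h1
    · have hx0 : 0 < ‖x‖ := by
        rcases eq_or_lt_of_le (norm_nonneg x) with h | h
        · exfalso
          rw [← h, Real.zero_rpow (by intro h'; exact absurd h' (by intro h''; linarith [sub_eq_zero.mp h'']))] at hx
          linarith
        · exact h
      have h2 := Real.rpow_lt_rpow_of_neg hs0 hx hzneg
      rwa [Real.rpow_rpow_inv (norm_nonneg x) (by intro h'; linarith [sub_eq_zero.mp h'])] at h2
    · push_neg at h1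
      have := Real.rpow_le_one_of_one_le_of_nonpos h1.le (show -(c+α) ≤ 0 by linarith)
      linarith
  calc volume {x : EuclideanSpace ℝ (Fin d) | s < uc d c x}
      ≤ volume (ball (0 : EuclideanSpace ℝ (Fin d)) (s ^ (c - α)⁻¹)) := measure_mono hsub
    _ = _ := vol_ball (by omega) (rpow_pos_of_pos hs0 _).le

/-- Case `α < c`, `0 < s < 1`: the superlevel set is an annulus. -/
private lemma volB {d : ℕ} (hd : 3 ≤ d) {c α s : ℝ} (hα : ((d:ℝ)-2)/2 = α)
    (hcα : α < c) (hs : 0 < s) (hs1 : s < 1) :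
    volume {x : EuclideanSpace ℝ (Fin d) | s < uc d c x}
      = ENNReal.ofReal ((s ^ (-(c+α))⁻¹) ^ d)
          * volume (ball (0 : EuclideanSpace ℝ (Fin d)) 1)
        - ENNReal.ofReal ((s ^ (c - α)⁻¹) ^ d)
          * volume (ball (0 : EuclideanSpace ℝ (Fin d)) 1) := by
  have hd3 : (3:ℝ) ≤ (d:ℝ) := by exact_mod_cast hd
  have hα0 : 0 < α := by rw [← hα]; linarith
  have hca : 0 < c + α := by linarith
  have hcm : 0 < c - α := by linarith
  set R1 := s ^ (c - α)⁻¹ with hR1def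
  set R2 := s ^ (-(c+α))⁻¹ with hR2def
  have hR10 : 0 < R1 := rpow_pos_of_pos hs _
  have hR20 : 0 < R2 := rpow_pos_of_pos hs _
  have hR11 : R1 < 1 := Real.rpow_lt_one hs.le hs1 (by positivity)
  have hR21 : 1 < R2 := Real.one_lt_rpow_of_pos_of_lt_one_of_neg hs hs1
    (inv_lt_zero.mpr (by linarith))
  have hR1s : R1 ^ (c - α) = s := Real.rpow_inv_rpow hs.le (by linarith)
  have hR2s : R2 ^ (-(c+α)) = s := Real.rpow_inv_rpow hs.le (by linarith)
  have hset : {x : EuclideanSpace ℝ (Fin d) | s < uc d c x}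
      = ball (0 : EuclideanSpace ℝ (Fin d)) R2 \ closedBall 0 R1 := by
    ext x
    simp only [Set.mem_setOf_eq, Set.mem_diff, mem_ball_zero_iff, mem_closedBall_zero_iff,
      not_le, uc_eq d hα]
    constructor
    · intro hx
      split_ifs at hx with h1
      · have hx0 : 0 < ‖x‖ := by
          rcases eq_or_lt_of_le (norm_nonneg x) with h | h
          · exfalso
            rw [← h, Real.zero_rpow (by linarith)] at hx
            linarith
          · exact h
        refine ⟨lt_of_le_of_lt h1 hR21, ?_⟩
        have h2 := Real.rpow_lt_rpow hs.le hx (inv_pos.mpr hcm)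
        rwa [Real.rpow_rpow_inv (norm_nonneg x) (by linarith)] at h2
      · push_neg at h1
        constructor
        · have hx0 : 0 < ‖x‖ := lt_trans one_pos h1
          have h2 := Real.rpow_lt_rpow_of_neg hs hx (inv_lt_zero.mpr (show -(c+α) < 0 by linarith))
          rwa [Real.rpow_rpow_inv (norm_nonneg x) (by linarith)] at h2
        · exact lt_trans hR11 h1
    · rintro ⟨hx2, hx1⟩
      have hx0 : 0 < ‖x‖ := lt_trans hR10 hx1
      split_ifs with h1
      · have := Real.rpow_lt_rpow hR10.le hx1 hcm
        rwa [hR1s] at this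
      · have := Real.rpow_lt_rpow_of_neg hx0 hx2 (show -(c+α) < 0 by linarith)
        rwa [hR2s] at this
  rw [hset, measure_diff
      (closedBall_subset_ball (lt_trans hR11 hR21))
      measurableSet_closedBall.nullMeasurableSet
      measure_closedBall_lt_top.ne,
    vol_ball (by omega) hR20.le, vol_cball (by omega) hR10.le]

/-- Scalar computation `s * ((s^y)^d * X)^p = s^(1 + y·d·p) * X^p`. -/
private lemma scal {d : ℕ} {s y p X : ℝ} (hs : 0 < s) (hX : 0 ≤ X) :
    s * ((s ^ y) ^ d * X) ^ p = s ^ (1 + y * (d:ℝ) * p) * X ^ p := by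
  rw [Real.mul_rpow (by positivity) hX, ← Real.rpow_natCast (s ^ y) d,
    ← Real.rpow_mul hs.le, ← Real.rpow_mul hs.le, Real.rpow_add hs, Real.rpow_one, mul_assoc, mul_assoc]

private lemma expA {c α dd p : ℝ} (hc : 0 < c) (hα : 0 < α) (hd : 0 < dd) (hp : p = α / dd) :
    1 + (-(c + α))⁻¹ * dd * p = c / (c + α) := by
  subst hp
  have h1 : c + α ≠ 0 := by linarith
  have h2 : dd ≠ 0 := by linarith
  rw [inv_neg]
  field_simp
  ring

private lemma expB {c α dd p : ℝ} (hc : 0 < c) (hα : 0 < α) (hne : c - α ≠ 0) (hd : 0 < dd)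
    (hp : p = α / dd) : 1 + (c - α)⁻¹ * dd * p = c / (c - α) := by
  subst hp
  have h2 : dd ≠ 0 := by linarith
  field_simp
  ring


set_option maxHeartbeats 1000000 in
/-- For `d ≥ 3`, `2* = 2d/(d−2)` (so `1/2* = (d−2)/(2d)`) and `c > 0`:
(a) if `0 < c ≤ (d−2)/2` then `‖u_c‖_{L^{2*,∞}} = |B(0,1)|^{1/2*}`;
(b) if `c > (d−2)/2` then `‖u_c‖_{L^{2*,∞}} < |B(0,1)|^{1/2*}`. -/
theorem stmt15 (d : ℕ) (hd : 3 ≤ d) (c : ℝ) (hc : 0 < c) :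
    (c ≤ ((d : ℝ) - 2) / 2 →
      weakNorm (2 * d / ((d : ℝ) - 2)) (uc d c) =
        (volume (Metric.ball (0 : EuclideanSpace ℝ (Fin d)) 1)).toReal ^
          (((d : ℝ) - 2) / (2 * d))) ∧
    (((d : ℝ) - 2) / 2 < c →
      weakNorm (2 * d / ((d : ℝ) - 2)) (uc d c) <
        (volume (Metric.ball (0 : EuclideanSpace ℝ (Fin d)) 1)).toReal ^
          (((d : ℝ) - 2) / (2 * d))) := by
  have hd3 : (3:ℝ) ≤ (d:ℝ) := by exact_mod_cast hd
  have hdpos : (0:ℝ) < d := by linarith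
  set α : ℝ := ((d:ℝ) - 2) / 2 with hαdef
  have hα : ((d:ℝ) - 2) / 2 = α := rfl
  have hα0 : 0 < α := by rw [← hα]; linarith
  set p : ℝ := α / (d:ℝ) with hpdef
  have hp0 : 0 < p := by positivity
  have hqp : 1 / (2 * (d:ℝ) / ((d:ℝ) - 2)) = p := by
    rw [hpdef, hαdef]
    have h2 : (d:ℝ) - 2 ≠ 0 := by linarith
    field_simp
  have hq2 : ((d:ℝ) - 2) / (2 * (d:ℝ)) = p := by
    rw [hpdef, hαdef]
    field_simp
  set V := volume (Metric.ball (0 : EuclideanSpace ℝ (Fin d)) 1) with hV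
  have hV0 : V ≠ 0 := (measure_ball_pos _ _ one_pos).ne'
  have hVtop : V ≠ ⊤ := measure_ball_lt_top.ne
  set Vr := V.toReal with hVrdef
  have hVr : 0 < Vr := ENNReal.toReal_pos hV0 hVtop
  set L := Vr ^ p with hL
  have hL0 : 0 < L := rpow_pos_of_pos hVr p
  have habs : ∀ x : EuclideanSpace ℝ (Fin d), |uc d c x| = uc d c x :=
    fun x => abs_of_nonneg (uc_nn d c x)
  have hne : Nonempty (Set.Ioi (0:ℝ)) := ⟨⟨1, Set.mem_Ioi.mpr one_pos⟩⟩
  set F : Set.Ioi (0:ℝ) → ℝ := fun s =>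
    (s:ℝ) * (volume {x : EuclideanSpace ℝ (Fin d) | (s:ℝ) < uc d c x}).toReal ^ p with hF
  have hwn : weakNorm (2 * d / ((d : ℝ) - 2)) (uc d c) = ⨆ s, F s := by
    unfold weakNorm
    simp only [habs, hqp, hF]
  have hF0 : ∀ s, 0 ≤ F s := fun s => by
    have := s.2
    simp only [Set.mem_Ioi] at this
    positivity
  rw [hwn, hq2]
  constructor
  · -- part (a) : c ≤ α
    intro hcα
    have hformula : ∀ s : ℝ, (hs : 0 < s) → s < 1 →
        s * (volume {x : EuclideanSpace ℝ (Fin d) | s < uc d c x}).toReal ^ p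
          = s ^ (c / (c + α)) * L := by
      intro s hs hs1
      rw [volA hd hc hα hcα hs hs1, ← hV, ENNReal.toReal_mul, ENNReal.toReal_ofReal (by positivity),
        ← hVrdef, scal hs hVr.le, expA hc hα0 hdpos hpdef, hL]
    have hub : ∀ s : Set.Ioi (0:ℝ), F s ≤ L := by
      rintro ⟨s, hs⟩
      have hs : 0 < s := hs
      simp only [hF]
      by_cases hs1 : s < 1
      · rw [hformula s hs hs1]
        have h1 : s ^ (c / (c + α)) ≤ 1 :=
          Real.rpow_le_one hs.le hs1.le (by positivity)
        nlinarith
      · push_neg at hs1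
        rcases eq_or_lt_of_le hcα with hce | hclt
        · rw [emptyB hd hα (le_of_eq hce.symm) hs1]
          simp [Real.zero_rpow hp0.ne', hL0.le]
        · have h1 := ENNReal.toReal_mono
            (ENNReal.mul_ne_top ENNReal.ofReal_ne_top hVtop)
            (boundA2 hd hc hα hclt hs1)
          rw [ENNReal.toReal_mul, ENNReal.toReal_ofReal (by positivity), ← hVrdef] at h1
          have h2 : s * (volume {x : EuclideanSpace ℝ (Fin d) | s < uc d c x}).toReal ^ p
              ≤ s * ((s ^ (c - α)⁻¹) ^ d * Vr) ^ p := by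
            have := Real.rpow_le_rpow ENNReal.toReal_nonneg h1 hp0.le
            nlinarith [Real.rpow_nonneg (ENNReal.toReal_nonneg :
              (0:ℝ) ≤ (volume {x : EuclideanSpace ℝ (Fin d) | s < uc d c x}).toReal) p]
          rw [scal hs hVr.le] at h2
          rw [expB hc hα0 (by intro h'; linarith [sub_eq_zero.mp h']) hdpos hpdef] at h2
          have h3 : s ^ (c / (c - α)) ≤ 1 :=
            Real.rpow_le_one_of_one_le_of_nonpos hs1
              (le_of_lt (div_neg_of_pos_of_neg hc (by linarith)))
          calc s * (volume {x : EuclideanSpace ℝ (Fin d) | s < uc d c x}).toReal ^ p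
              ≤ s ^ (c / (c - α)) * Vr ^ p := h2
            _ ≤ 1 * Vr ^ p := by nlinarith [Real.rpow_nonneg hVr.le p]
            _ = L := by rw [one_mul, hL]
    have hbdd : BddAbove (Set.range F) := ⟨L, by rintro _ ⟨s, rfl⟩; exact hub s⟩
    have hsup0 : 0 ≤ ⨆ s, F s :=
      le_trans (hF0 ⟨1, Set.mem_Ioi.mpr one_pos⟩) (le_ciSup hbdd ⟨1, Set.mem_Ioi.mpr one_pos⟩)
    refine le_antisymm (ciSup_le hub) ?_
    apply le_of_forall_sub_le
    intro ε hε
    rcases le_or_gt L ε with h | h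
    · linarith
    · have htd : ε / L < 1 := (div_lt_one hL0).mpr h
      have htd0 : 0 < ε / L := div_pos hε hL0
      set t : ℝ := 1 - ε / L with htdef
      have ht0 : 0 < t := by rw [htdef]; linarith
      have ht1 : t < 1 := by rw [htdef]; linarith
      have hpq0 : 0 < c / (c + α) := div_pos hc (by linarith)
      set s : ℝ := t ^ (c / (c + α))⁻¹ with hsdef
      have hs0 : 0 < s := rpow_pos_of_pos ht0 _
      have hs1 : s < 1 := Real.rpow_lt_one ht0.le ht1 (by positivity)
      have hFs : F ⟨s, Set.mem_Ioi.mpr hs0⟩ = L - ε := by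
        simp only [hF]
        rw [hformula s hs0 hs1, hsdef, Real.rpow_inv_rpow ht0.le hpq0.ne', htdef]
        field_simp
      calc L - ε = F ⟨s, Set.mem_Ioi.mpr hs0⟩ := hFs.symm
        _ ≤ ⨆ s, F s := le_ciSup hbdd _
  · -- part (b) : α < c
    intro hcα
    have hcm : (0:ℝ) < c - α := by linarith
    have hca : (0:ℝ) < c + α := by linarith
    set a : ℝ := p⁻¹ + (-(c+α))⁻¹ * d with hadef
    set b : ℝ := p⁻¹ + (c-α)⁻¹ * d with hbdef
    have ha0 : 0 < a := by
      have e : a = (d:ℝ) * c / (α * (c+α)) := by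
        rw [hadef, hpdef, inv_neg, inv_div]
        field_simp
        ring
      rw [e]; positivity
    have hab : a < b := by
      rw [hadef, hbdef]
      have h1 : (-(c+α))⁻¹ < (c-α)⁻¹ :=
        lt_trans (inv_lt_zero.mpr (by linarith)) (inv_pos.mpr hcm)
      nlinarith
    have hb0 : 0 < b := lt_trans ha0 hab
    have hform : ∀ s : ℝ, (hs : 0 < s) → s < 1 →
        s * (volume {x : EuclideanSpace ℝ (Fin d) | s < uc d c x}).toReal ^ p
          = (s ^ a - s ^ b) ^ p * L := by
      intro s hs hs1
      have hR10 : (0:ℝ) < s ^ (c-α)⁻¹ := rpow_pos_of_pos hs _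
      have hR20 : (0:ℝ) < s ^ (-(c+α))⁻¹ := rpow_pos_of_pos hs _
      have hR12 : s ^ (c-α)⁻¹ ≤ s ^ (-(c+α))⁻¹ :=
        le_of_lt (lt_trans (Real.rpow_lt_one hs.le hs1 (inv_pos.mpr hcm))
          (Real.one_lt_rpow_of_pos_of_lt_one_of_neg hs hs1 (inv_lt_zero.mpr (by linarith))))
      have hd1 : (s ^ (c-α)⁻¹) ^ d ≤ (s ^ (-(c+α))⁻¹) ^ d := pow_le_pow_left₀ hR10.le hR12 d
      have hle : ENNReal.ofReal ((s ^ (c-α)⁻¹) ^ d) * V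
          ≤ ENNReal.ofReal ((s ^ (-(c+α))⁻¹) ^ d) * V :=
        mul_le_mul_left (ENNReal.ofReal_le_ofReal hd1) V
      have htop : ENNReal.ofReal ((s ^ (-(c+α))⁻¹) ^ d) * V ≠ ⊤ :=
        ENNReal.mul_ne_top ENNReal.ofReal_ne_top hVtop
      rw [volB hd hα hcα hs hs1, ← hV, ENNReal.toReal_sub_of_le hle htop,
        ENNReal.toReal_mul, ENNReal.toReal_mul, ENNReal.toReal_ofReal (pow_nonneg hR20.le d),
        ENNReal.toReal_ofReal (pow_nonneg hR10.le d), ← hVrdef]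
      have hkey : s ^ (p⁻¹) * ((s ^ (-(c+α))⁻¹) ^ d - (s ^ (c-α)⁻¹) ^ d) = s ^ a - s ^ b := by
        rw [mul_sub, ← Real.rpow_natCast (s ^ (-(c+α))⁻¹) d, ← Real.rpow_natCast (s ^ (c-α)⁻¹) d,
          ← Real.rpow_mul hs.le, ← Real.rpow_mul hs.le, ← Real.rpow_add hs, ← Real.rpow_add hs,
          ← hadef, ← hbdef]
      have hsub : (0:ℝ) ≤ (s ^ (-(c+α))⁻¹) ^ d - (s ^ (c-α)⁻¹) ^ d := by linarith
      calc s * ((s ^ (-(c+α))⁻¹) ^ d * Vr - (s ^ (c-α)⁻¹) ^ d * Vr) ^ p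
          = s * (((s ^ (-(c+α))⁻¹) ^ d - (s ^ (c-α)⁻¹) ^ d) * Vr) ^ p := by ring_nf
        _ = s * (((s ^ (-(c+α))⁻¹) ^ d - (s ^ (c-α)⁻¹) ^ d) ^ p * Vr ^ p) := by
            rw [Real.mul_rpow hsub hVr.le]
        _ = ((s ^ p⁻¹) ^ p * ((s ^ (-(c+α))⁻¹) ^ d - (s ^ (c-α)⁻¹) ^ d) ^ p) * Vr ^ p := by
            rw [Real.rpow_inv_rpow hs.le hp0.ne']; ring
        _ = (s ^ p⁻¹ * ((s ^ (-(c+α))⁻¹) ^ d - (s ^ (c-α)⁻¹) ^ d)) ^ p * Vr ^ p := by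
            rw [Real.mul_rpow (Real.rpow_nonneg hs.le _) hsub]
        _ = (s ^ a - s ^ b) ^ p * L := by rw [hkey, hL]
    have hcont : ContinuousOn (fun t : ℝ => t ^ a - t ^ b) (Set.Icc 0 1) :=
      ((Real.continuous_rpow_const ha0.le).sub
        (Real.continuous_rpow_const hb0.le)).continuousOn
    obtain ⟨t₀, ht₀, hmax⟩ :=
      isCompact_Icc.exists_isMaxOn (Set.nonempty_Icc.mpr zero_le_one) hcont
    set M : ℝ := t₀ ^ a - t₀ ^ b with hM
    have hmax' : ∀ t : ℝ, 0 ≤ t → t ≤ 1 → t ^ a - t ^ b ≤ M := fun t h0 h1 =>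
      hmax (Set.mem_Icc.mpr ⟨h0, h1⟩)
    have hM0 : 0 ≤ M := by
      have h := hmax' 1 zero_le_one le_rfl
      rwa [Real.one_rpow, Real.one_rpow, sub_self] at h
    have hM1 : M < 1 := by
      rcases eq_or_lt_of_le ht₀.1 with h0 | h0
      · rw [hM, ← h0, Real.zero_rpow ha0.ne', Real.zero_rpow hb0.ne']
        norm_num
      · rcases eq_or_lt_of_le ht₀.2 with h1 | h1
        · rw [hM, h1, Real.one_rpow, Real.one_rpow]
          norm_num
        · have h2 : t₀ ^ a < 1 := Real.rpow_lt_one ht₀.1 h1 ha0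
          have h3 : 0 ≤ t₀ ^ b := Real.rpow_nonneg ht₀.1 b
          rw [hM]
          linarith
    have hub : ∀ s : Set.Ioi (0:ℝ), F s ≤ M ^ p * L := by
      rintro ⟨s, hs⟩
      have hs : 0 < s := hs
      simp only [hF]
      by_cases hs1 : s < 1
      · rw [hform s hs hs1]
        have h1 : (0:ℝ) ≤ s ^ a - s ^ b := by
          have := Real.rpow_le_rpow_of_exponent_ge hs hs1.le hab.le
          linarith
        have h2 : (s ^ a - s ^ b) ^ p ≤ M ^ p :=
          Real.rpow_le_rpow h1 (hmax' s hs.le hs1.le) hp0.le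
        exact mul_le_mul_of_nonneg_right h2 hL0.le
      · push_neg at hs1
        rw [emptyB hd hα hcα.le hs1]
        rw [measure_empty, ENNReal.toReal_zero, Real.zero_rpow hp0.ne', mul_zero]
        exact mul_nonneg (Real.rpow_nonneg hM0 p) hL0.le
    calc (⨆ s, F s) ≤ M ^ p * L := ciSup_le hub
      _ < 1 * L := by
          have h := Real.rpow_lt_one hM0 hM1 hp0
          nlinarith
      _ = L := one_mul L
end
end

section
/- Let p ∈ (1,∞) and p' = p/(p−1). For every absolutely continuous function f : (0,∞) → [0,∞) with lim_{s→0} f(s) = 0 and lim_{s→∞} f(s) = 0, one has ( ∫_0^∞ |f'(s)|^p s^{p−1} ds )^{1/p} · ( ∫_0^∞ |f(s)|^p / s ds )^{1/p'} ≥ p^{−1} ‖f‖_{L^∞(0,∞)}^p. -/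
open MeasureTheory Set
open scoped ENNReal

noncomputable section

/-- For `1 < p < ∞` and `p' = p/(p−1)`: every absolutely continuous
`f : (0,∞) → [0,∞)` with `f(s) → 0` as `s → 0⁺` and as `s → ∞` satisfies
`(∫_0^∞ |f'|^p s^{p−1} ds)^{1/p} (∫_0^∞ |f|^p/s ds)^{1/p'} ≥ p^{−1} ‖f‖_{L^∞(0,∞)}^p`. -/
theorem stmt19 (p p' : ℝ) (hp : 1 < p) (hp' : p' = p / (p - 1))
    (f f' : ℝ → ℝ) (hAC : ACDerivOn f f')
    (hnonneg : ∀ s ∈ Set.Ioi (0 : ℝ), 0 ≤ f s)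
    (hlim0 : Filter.Tendsto f (nhdsWithin 0 (Set.Ioi 0)) (nhds 0))
    (hliminf : Filter.Tendsto f Filter.atTop (nhds 0)) :
    ENNReal.ofReal p⁻¹ * eLpNorm f ⊤ (volume.restrict (Set.Ioi 0)) ^ p ≤
      (∫⁻ s in Set.Ioi (0 : ℝ), ENNReal.ofReal (|f' s| ^ p * s ^ (p - 1))) ^ (1 / p) *
        (∫⁻ s in Set.Ioi (0 : ℝ), ENNReal.ofReal (|f s| ^ p / s)) ^ (1 / p') := by
  have hp0 : (0:ℝ) < p := lt_trans one_pos hp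
  have hp1 : (0:ℝ) < p - 1 := by linarith
  have hpq : p.HolderConjugate p' := (Real.holderConjugate_iff_eq_conjExponent hp).2 hp'
  -- continuity of `f` on `(0,∞)`
  have hcont : ∀ x ∈ Ioi (0:ℝ), ContinuousAt f x := by
    intro x hx
    simp only [mem_Ioi] at hx
    have ha : (0:ℝ) < x/2 := by linarith
    have hint := (hAC (x/2) (x+1) ha (by linarith)).1
    have hprim : ContinuousOn (fun y => f (x/2) + ∫ t in Ioc (x/2) y, f' t)
        (Icc (x/2) (x+1)) :=
      continuousOn_const.add (intervalIntegral.continuousOn_primitive hint)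
    have hmem : Icc (x/2) (x+1) ∈ nhds x := Icc_mem_nhds (by linarith) (by linarith)
    have hF : ContinuousAt (fun y => f (x/2) + ∫ t in Ioc (x/2) y, f' t) x :=
      hprim.continuousAt hmem
    apply hF.congr
    filter_upwards [Ioo_mem_nhds (show x/2 < x by linarith) (show x < x+1 by linarith)]
      with y hy
    have h2 := (hAC (x/2) y ha hy.1.le).2
    rw [intervalIntegral.integral_of_le hy.1.le] at h2
    linarith
  have hfc : ContinuousOn f (Ioi (0:ℝ)) := fun x hx => (hcont x hx).continuousWithinAt
  have hfm : AEMeasurable f (volume.restrict (Ioi (0:ℝ))) :=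
    hfc.aemeasurable measurableSet_Ioi
  -- measurability of `f'`
  have hf'm : AEMeasurable f' (volume.restrict (Ioi (0:ℝ))) := by
    have hsub : Ioi (0:ℝ) ⊆ ⋃ n : ℕ, Icc (1/(n+1) : ℝ) (n+1) := by
      intro t ht
      simp only [mem_Ioi] at ht
      obtain ⟨n, hn⟩ := exists_nat_gt (max t (1/t))
      have hn1 : max t (1/t) < (n:ℝ) + 1 := lt_of_lt_of_le hn (by linarith)
      have h1 : t < (n:ℝ) + 1 := lt_of_le_of_lt (le_max_left _ _) hn1
      have h2 : 1/t < (n:ℝ) + 1 := lt_of_le_of_lt (le_max_right _ _) hn1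
      refine mem_iUnion.2 ⟨n, ?_, h1.le⟩
      rw [div_le_iff₀ (by positivity)]
      rw [div_lt_iff₀ ht] at h2
      nlinarith
    refine AEMeasurable.mono_measure ?_ (Measure.restrict_mono hsub le_rfl)
    rw [aemeasurable_iUnion_iff]
    intro n
    have hle : (1/(n+1) : ℝ) ≤ (n:ℝ)+1 := by
      rw [div_le_iff₀ (by positivity)]
      nlinarith [Nat.cast_nonneg (α := ℝ) n]
    exact ((hAC (1/(n+1)) ((n:ℝ)+1) (by positivity) hle).1).aestronglyMeasurable.aemeasurable
  -- the weighted measure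
  set dens : ℝ → ℝ≥0∞ := fun t => ENNReal.ofReal |f' t| with hdens
  have hdensm : AEMeasurable dens (volume.restrict (Ioi (0:ℝ))) :=
    ENNReal.measurable_ofReal.comp_aemeasurable (continuous_abs.measurable.comp_aemeasurable hf'm)
  set ν : Measure ℝ := (volume.restrict (Ioi 0)).withDensity dens with hν
  have hνac : ν ≪ volume.restrict (Ioi (0:ℝ)) := withDensity_absolutelyContinuous _ _
  have hfmν : AEMeasurable f ν := hfm.mono_ac hνac
  have hfnnν : 0 ≤ᵐ[ν] f :=
    hνac.ae_le ((ae_restrict_mem measurableSet_Ioi).mono (fun t ht => hnonneg t ht))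
  -- level set bound
  have hlevel : ∀ x ∈ Ioi (0:ℝ), ∀ s : ℝ, 0 < s → s < f x →
      ENNReal.ofReal (f x - s) ≤ ν {t | s < f t} := by
    intro x hx s hs hsx
    simp only [mem_Ioi] at hx
    obtain ⟨t0, ht0s, ht00, ht0x⟩ : ∃ t0, f t0 < s ∧ 0 < t0 ∧ t0 < x := by
      have h1 : ∀ᶠ t in nhdsWithin 0 (Ioi 0), f t < s :=
        hlim0.eventually_lt_const hs
      have h2 : ∀ᶠ t in nhdsWithin (0:ℝ) (Ioi 0), t ∈ Ioo (0:ℝ) x :=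
        Filter.eventually_of_mem (Ioo_mem_nhdsGT_of_mem ⟨le_refl 0, hx⟩) (fun t ht => ht)
      obtain ⟨t0, h3, h4⟩ := (h1.and h2).exists
      exact ⟨t0, h3, h4.1, h4.2⟩
    set S := {t | t ∈ Icc t0 x ∧ f t ≤ s} with hS
    have hScl : IsClosed S := by
      have hfc' : ContinuousOn f (Icc t0 x) :=
        hfc.mono (fun t ht => lt_of_lt_of_le ht00 ht.1)
      exact hfc'.preimage_isClosed_of_isClosed isClosed_Icc isClosed_Iic
    have hSne : S.Nonempty := ⟨t0, ⟨le_refl t0, ht0x.le⟩, ht0s.le⟩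
    have hSbdd : BddAbove S := ⟨x, fun t ht => ht.1.2⟩
    set a := sSup S with ha
    have haS : a ∈ S := hScl.csSup_mem hSne hSbdd
    have ha0 : 0 < a := lt_of_lt_of_le ht00 haS.1.1
    have hax : a ≤ x := haS.1.2
    have hfa : f a ≤ s := haS.2
    have hsub2 : Ioc a x ⊆ {t | s < f t} := by
      intro t ht
      by_contra hc
      simp only [mem_setOf_eq, not_lt] at hc
      have htS : t ∈ S := ⟨⟨le_trans haS.1.1 ht.1.le, ht.2⟩, hc⟩
      exact absurd (le_csSup hSbdd htS) (not_le.2 ht.1)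
    have hint := (hAC a x ha0 hax).1
    have hii : IntervalIntegrable f' volume a x :=
      (intervalIntegrable_iff_integrableOn_Ioc_of_le hax).2
        (hint.mono_set Ioc_subset_Icc_self)
    have heq := (hAC a x ha0 hax).2
    have hmono : (∫ t in a..x, f' t) ≤ ∫ t in a..x, |f' t| :=
      intervalIntegral.integral_mono_on hax hii hii.abs (fun t _ => le_abs_self _)
    have habs : IntegrableOn (fun t => |f' t|) (Ioc a x) volume :=
      ((hint.mono_set Ioc_subset_Icc_self)).abs
    calc ENNReal.ofReal (f x - s)
        ≤ ENNReal.ofReal (∫ t in Ioc a x, |f' t|) := by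
          apply ENNReal.ofReal_le_ofReal
          have h3 : (∫ t in a..x, |f' t|) = ∫ t in Ioc a x, |f' t| :=
            intervalIntegral.integral_of_le hax
          linarith
      _ = ∫⁻ t in Ioc a x, ENNReal.ofReal |f' t| := by
          rw [ofReal_integral_eq_lintegral_ofReal habs
            (Filter.Eventually.of_forall (fun t => abs_nonneg _))]
      _ = ν (Ioc a x) := by
          rw [hν, withDensity_apply _ measurableSet_Ioc,
            Measure.restrict_restrict measurableSet_Ioc,
            inter_eq_self_of_subset_left
              (show Ioc a x ⊆ Ioi 0 from fun t ht => lt_trans ha0 ht.1)]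
      _ ≤ ν {t | s < f t} := measure_mono hsub2
  -- layer cake
  set g : ℝ → ℝ := fun t => (p-1) * t ^ (p-2) with hg
  have hlayer := lintegral_comp_eq_lintegral_meas_lt_mul ν hfnnν hfmν
    (fun t _ => (intervalIntegral.intervalIntegrable_rpow' (by linarith : (-1:ℝ) < p-2)).const_mul (p-1))
    (by
      filter_upwards [ae_restrict_mem measurableSet_Ioi] with t ht
      exact mul_nonneg hp1.le (Real.rpow_nonneg (le_of_lt ht) _))
  have hGf : ∀ c : ℝ, 0 ≤ c → (∫ t in (0:ℝ)..c, g t) = c ^ (p-1) := by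
    intro c _
    rw [hg]
    rw [intervalIntegral.integral_const_mul, integral_rpow (Or.inl (by linarith))]
    have hpe : p - 2 + 1 = p - 1 := by ring
    rw [hpe, Real.zero_rpow hp1.ne']
    field_simp
    ring
  have hLHS : ∫⁻ ω, ENNReal.ofReal (∫ t in (0:ℝ)..f ω, g t) ∂ν
      = ∫⁻ ω, ENNReal.ofReal (f ω ^ (p-1)) ∂ν := by
    apply lintegral_congr_ae
    filter_upwards [hfnnν] with ω hω
    rw [hGf _ hω]
  set J := ∫⁻ t in Ioi (0:ℝ), dens t * ENNReal.ofReal (f t ^ (p-1)) with hJ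
  have hfpm : AEMeasurable (fun t => ENNReal.ofReal (f t ^ (p-1)))
      (volume.restrict (Ioi (0:ℝ))) :=
    ENNReal.measurable_ofReal.comp_aemeasurable
      (((Real.continuous_rpow_const hp1.le).measurable).comp_aemeasurable hfm)
  have hJν : ∫⁻ ω, ENNReal.ofReal (f ω ^ (p-1)) ∂ν = J := by
    rw [hν, lintegral_withDensity_eq_lintegral_mul₀ hdensm hfpm, hJ]
    rfl
  have hJmeas : J = ∫⁻ s in Ioi (0:ℝ), ν {a | s < f a} * ENNReal.ofReal (g s) := by
    rw [← hJν, ← hLHS, hlayer]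
  -- pointwise bound
  have hK : ∀ x ∈ Ioi (0:ℝ), ENNReal.ofReal (f x ^ p) ≤ ENNReal.ofReal p * J := by
    intro x hx
    rcases eq_or_lt_of_le (hnonneg x hx) with hc0 | hc0
    · rw [← hc0, Real.zero_rpow hp0.ne']
      simp
    · set c := f x with hc
      have hcp : ENNReal.ofReal (c ^ p) = ENNReal.ofReal p * ENNReal.ofReal (c ^ p / p) := by
        rw [← ENNReal.ofReal_mul hp0.le, mul_div_cancel₀ _ hp0.ne']
      rw [hcp]
      refine mul_le_mul_right ?_ _
      -- integrability
      have i1 : IntegrableOn (fun s : ℝ => s ^ (p-2)) (Ioc 0 c) volume :=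
        (intervalIntegrable_iff_integrableOn_Ioc_of_le hc0.le).1
          (intervalIntegral.intervalIntegrable_rpow' (by linarith))
      have i2 : IntegrableOn (fun s : ℝ => s ^ (p-1)) (Ioc 0 c) volume :=
        (intervalIntegrable_iff_integrableOn_Ioc_of_le hc0.le).1
          (intervalIntegral.intervalIntegrable_rpow' (by linarith))
      have hae : (fun s : ℝ => (p-1) * c * s^(p-2) - (p-1) * s^(p-1))
          =ᵐ[volume.restrict (Ioc (0:ℝ) c)] (fun s : ℝ => (c - s) * g s) := by
        filter_upwards [ae_restrict_mem measurableSet_Ioc] with s hs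
        have hspow : s ^ (p-1) = s * s ^ (p-2) := by
          rw [show p-1 = 1 + (p-2) by ring, Real.rpow_add hs.1, Real.rpow_one]
        rw [hg]
        simp only []
        rw [hspow]
        ring
      have hInt : IntegrableOn (fun s : ℝ => (c - s) * g s) (Ioc 0 c) volume :=
        ((i1.const_mul ((p-1)*c)).sub (i2.const_mul (p-1))).congr hae
      have hNN : 0 ≤ᵐ[volume.restrict (Ioc (0:ℝ) c)] fun s => (c - s) * g s := by
        filter_upwards [ae_restrict_mem measurableSet_Ioc] with s hs
        exact mul_nonneg (by linarith [hs.2]) (mul_nonneg hp1.le (Real.rpow_nonneg hs.1.le _))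
      have hval2 : (∫ s in Ioc (0:ℝ) c, (c - s) * g s) = c ^ p / p := by
        rw [← integral_congr_ae hae]
        rw [integral_sub (i1.const_mul ((p-1)*c)) (i2.const_mul (p-1)),
          integral_const_mul, integral_const_mul]
        rw [← intervalIntegral.integral_of_le hc0.le, ← intervalIntegral.integral_of_le hc0.le]
        rw [integral_rpow (Or.inl (by linarith : (-1:ℝ) < p-2)),
          integral_rpow (Or.inl (by linarith : (-1:ℝ) < p-1))]
        have e1 : p - 2 + 1 = p - 1 := by ring
        have e2 : p - 1 + 1 = p := by ring
        rw [e1, e2, Real.zero_rpow hp1.ne', Real.zero_rpow hp0.ne', sub_zero, sub_zero]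
        have hcc : c * c ^ (p - 1) = c ^ p := by
          have h := Real.rpow_add hc0 1 (p-1)
          rw [Real.rpow_one] at h
          rw [← h]
          congr 1
          ring
        have hcc2 : c ^ (p-1) = c ^ p / c := by
          rw [eq_div_iff hc0.ne', mul_comm, hcc]
        rw [hcc2]
        field_simp
        ring
      calc ENNReal.ofReal (c ^ p / p)
          = ∫⁻ s in Ioc (0:ℝ) c, ENNReal.ofReal ((c - s) * g s) := by
            rw [← hval2, ofReal_integral_eq_lintegral_ofReal hInt hNN]
        _ ≤ ∫⁻ s in Ioc (0:ℝ) c, ν {a | s < f a} * ENNReal.ofReal (g s) := by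
            apply lintegral_mono_ae
            filter_upwards [ae_restrict_mem measurableSet_Ioc] with s hs
            rcases lt_or_eq_of_le hs.2 with hsc | hsc
            · rw [ENNReal.ofReal_mul (by linarith : (0:ℝ) ≤ c - s)]
              exact mul_le_mul_left (hlevel x hx s hs.1 hsc) _
            · rw [hsc]
              simp
        _ ≤ ∫⁻ s in Ioi (0:ℝ), ν {a | s < f a} * ENNReal.ofReal (g s) :=
            lintegral_mono_set (fun s hs => hs.1)
        _ = J := hJmeas.symm
  -- Hölder
  set A := ∫⁻ s in Ioi (0:ℝ), ENNReal.ofReal (|f' s| ^ p * s ^ (p-1)) with hA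
  set B := ∫⁻ s in Ioi (0:ℝ), ENNReal.ofReal (|f s| ^ p / s) with hB
  set φ : ℝ → ℝ≥0∞ := fun t => ENNReal.ofReal (|f' t| * t ^ ((p-1)/p)) with hφ
  set ψ : ℝ → ℝ≥0∞ := fun t => ENNReal.ofReal (f t ^ (p-1) * t ^ (-((p-1)/p))) with hψ
  have hφm : AEMeasurable φ (volume.restrict (Ioi (0:ℝ))) :=
    ENNReal.measurable_ofReal.comp_aemeasurable
      ((continuous_abs.measurable.comp_aemeasurable hf'm).mul ((Real.continuous_rpow_const (by positivity)).measurable.aemeasurable))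
  have hψm : AEMeasurable ψ (volume.restrict (Ioi (0:ℝ))) := by
    apply ENNReal.measurable_ofReal.comp_aemeasurable
    apply AEMeasurable.mul
    · exact ((Real.continuous_rpow_const hp1.le).measurable).comp_aemeasurable hfm
    · refine ContinuousOn.aemeasurable ?_ measurableSet_Ioi
      exact fun t ht =>
        (Real.continuousAt_rpow_const t _ (Or.inl (ne_of_gt ht))).continuousWithinAt
  have hJφψ : J = ∫⁻ t in Ioi (0:ℝ), (φ * ψ) t := by
    apply lintegral_congr_ae
    filter_upwards [ae_restrict_mem measurableSet_Ioi] with t ht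
    simp only [Pi.mul_apply, hφ, hψ, hdens]
    rw [← ENNReal.ofReal_mul (abs_nonneg _),
      ← ENNReal.ofReal_mul (mul_nonneg (abs_nonneg _) (Real.rpow_nonneg (mem_Ioi.1 ht).le _))]
    congr 1
    have h1 : t ^ ((p-1)/p) * t ^ (-((p-1)/p)) = 1 := by
      rw [← Real.rpow_add ht]
      simp
    calc |f' t| * f t ^ (p-1)
        = |f' t| * t ^ ((p-1)/p) * (f t ^ (p-1) * t ^ (-((p-1)/p)))
          - |f' t| * f t ^ (p-1) * (t ^ ((p-1)/p) * t ^ (-((p-1)/p)) - 1) := by ring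
      _ = |f' t| * t ^ ((p-1)/p) * (f t ^ (p-1) * t ^ (-((p-1)/p))) := by
          rw [h1]; ring
  have hφp : (∫⁻ t in Ioi (0:ℝ), φ t ^ p) = A := by
    apply lintegral_congr_ae
    filter_upwards [ae_restrict_mem measurableSet_Ioi] with t ht
    rw [hφ]
    simp only []
    rw [ENNReal.ofReal_rpow_of_nonneg
      (mul_nonneg (abs_nonneg _) (Real.rpow_nonneg (mem_Ioi.1 ht).le _)) hp0.le]
    congr 1
    rw [Real.mul_rpow (abs_nonneg _) (Real.rpow_nonneg ht.le _),
      ← Real.rpow_mul ht.le, div_mul_cancel₀ _ hp0.ne']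
  have hψp : (∫⁻ t in Ioi (0:ℝ), ψ t ^ p') = B := by
    apply lintegral_congr_ae
    filter_upwards [ae_restrict_mem measurableSet_Ioi] with t ht
    rw [hψ]
    simp only []
    rw [ENNReal.ofReal_rpow_of_nonneg
      (mul_nonneg (Real.rpow_nonneg (hnonneg t ht) _) (Real.rpow_nonneg ht.le _))
      hpq.symm.nonneg]
    congr 1
    rw [Real.mul_rpow (Real.rpow_nonneg (hnonneg t ht) _) (Real.rpow_nonneg ht.le _),
      ← Real.rpow_mul (hnonneg t ht), ← Real.rpow_mul ht.le]
    have e1 : (p-1) * p' = p := hpq.sub_one_mul_conj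
    have e2 : -((p-1)/p) * p' = -1 := by
      rw [hp']
      field_simp
    rw [e1, e2, Real.rpow_neg_one, abs_of_nonneg (hnonneg t ht), div_eq_mul_inv]
  have hJle : J ≤ A ^ (1/p) * B ^ (1/p') := by
    rw [hJφψ, ← hφp, ← hψp]
    exact ENNReal.lintegral_mul_le_Lp_mul_Lq _ hpq hφm hψm
  set T := A ^ (1/p) * B ^ (1/p') with hT
  -- essential supremum bound
  have hbound : eLpNorm f ⊤ (volume.restrict (Ioi (0:ℝ)))
      ≤ (ENNReal.ofReal p * T) ^ (1/p) := by
    rw [eLpNorm_exponent_top, eLpNormEssSup]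
    refine essSup_le_of_ae_le _ ?_
    filter_upwards [ae_restrict_mem measurableSet_Ioi] with x hx
    have h1 : ‖f x‖ₑ = ENNReal.ofReal (f x) := Real.enorm_eq_ofReal (hnonneg x hx)
    have h2 : ENNReal.ofReal (f x) = (ENNReal.ofReal (f x) ^ p) ^ (1/p) := by
      rw [← ENNReal.rpow_mul, mul_one_div, div_self hp0.ne', ENNReal.rpow_one]
    rw [h1, h2]
    apply ENNReal.rpow_le_rpow ?_ (by positivity)
    rw [ENNReal.ofReal_rpow_of_nonneg (hnonneg x hx) hp0.le]
    exact le_trans (hK x hx) (mul_le_mul_right hJle _)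
  have hfinal : eLpNorm f ⊤ (volume.restrict (Ioi (0:ℝ))) ^ p ≤ ENNReal.ofReal p * T := by
    calc eLpNorm f ⊤ (volume.restrict (Ioi (0:ℝ))) ^ p
        ≤ ((ENNReal.ofReal p * T) ^ (1/p)) ^ p := ENNReal.rpow_le_rpow hbound hp0.le
      _ = ENNReal.ofReal p * T := by
          rw [← ENNReal.rpow_mul, one_div, inv_mul_cancel₀ hp0.ne', ENNReal.rpow_one]
  calc ENNReal.ofReal p⁻¹ * eLpNorm f ⊤ (volume.restrict (Ioi (0:ℝ))) ^ p
      ≤ ENNReal.ofReal p⁻¹ * (ENNReal.ofReal p * T) := mul_le_mul_right hfinal _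
    _ = T := by
        rw [← mul_assoc, ← ENNReal.ofReal_mul (by positivity), inv_mul_cancel₀ hp0.ne',
          ENNReal.ofReal_one, one_mul]
end
end
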